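/- arXiv:2112.14090 — 8 statements merged into one kernel-verified Lean document; each statement's English description precedes it below -/
import Mathlib

section
/- Let the assumptions be as in the context, and suppose Φ(z) < Φ(0) for all 0 < z ≤ 1. Then there exists δ₀ > 0 such that for all 0 < δ < δ₀, max_{(α,β)∈[0,1]²} Φ̃_δ(α,β) = Φ̃_δ(0,0) = 1 − d/k − δ. -/
open scoped ENNReal

namespace DegreeModel

/-- The probability generating function `E[x^d]` of an integer-valued random
variable with law `ν`. -/
noncomputable def pgf (ν : PMF ℕ) (x : ℝ) : ℝ := ∑' i : ℕ, (ν i).toReal * x ^ i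

/-- The derivative `Σ_i P[d=i]·i·x^{i−1}` of the probability generating function. -/
noncomputable def pgf' (ν : PMF ℕ) (x : ℝ) : ℝ := ∑' i : ℕ, (ν i).toReal * i * x ^ (i - 1)

/-- The mean `E[d]` of an integer-valued random variable with law `ν`. -/
noncomputable def mean (ν : PMF ℕ) : ℝ := ∑' i : ℕ, (ν i).toReal * i

/-- The function `Φ(z) = D(1 − K'(z)/k) − (d/k)(1 − K(z) − (1−z)K'(z))`. -/
noncomputable def Phi (νd νk : PMF ℕ) (z : ℝ) : ℝ :=
  pgf νd (1 - pgf' νk z / mean νk) -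
    (mean νd / mean νk) * (1 - pgf νk z - (1 - z) * pgf' νk z)

/-- The function `Φ̃_δ(α,β) = Φ(α) + (exp(−3δβ²) − 1)·D(1 − K'(α)/k) − δ + 3δβ² − 2δβ³`. -/
noncomputable def PhiTilde (νd νk : PMF ℕ) (δ α β : ℝ) : ℝ :=
  Phi νd νk α + (Real.exp (-(3 * δ * β ^ 2)) - 1) * pgf νd (1 - pgf' νk α / mean νk)
    - δ + 3 * δ * β ^ 2 - 2 * δ * β ^ 3

end DegreeModel

namespace DegreeModel

lemma summable_f (ν : PMF ℕ) : Summable (fun i : ℕ => (ν i).toReal) :=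
  ENNReal.summable_toReal (by simp [ν.tsum_coe])

lemma tsum_f (ν : PMF ℕ) : ∑' i : ℕ, (ν i).toReal = 1 := by
  rw [← ENNReal.tsum_toReal_eq fun a => ν.apply_ne_top a, ν.tsum_coe, ENNReal.toReal_one]

lemma summable_fi (ν : PMF ℕ) (hmom : ∑' i : ℕ, (i : ℝ≥0∞) ^ 2 * ν i ≠ ⊤) :
    Summable (fun i : ℕ => (ν i).toReal * i) := by
  have h1 : ∑' i : ℕ, (i : ℝ≥0∞) * ν i ≠ ⊤ := by
    refine ne_top_of_le_ne_top hmom (ENNReal.tsum_le_tsum fun i => ?_)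
    refine mul_le_mul_left ?_ _
    have h : (i : ℕ) ≤ i ^ 2 := Nat.le_self_pow two_ne_zero i
    calc (i : ℝ≥0∞) ≤ ((i ^ 2 : ℕ) : ℝ≥0∞) := by exact_mod_cast h
      _ = (i : ℝ≥0∞) ^ 2 := by push_cast; ring
  exact (ENNReal.summable_toReal h1).congr fun i => by
    simp [ENNReal.toReal_mul, mul_comm]

lemma summable_fii (ν : PMF ℕ) (hmom : ∑' i : ℕ, (i : ℝ≥0∞) ^ 2 * ν i ≠ ⊤) :
    Summable (fun i : ℕ => (ν i).toReal * i * i) := by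
  exact (ENNReal.summable_toReal hmom).congr fun i => by
    simp [ENNReal.toReal_mul, ENNReal.toReal_pow]; ring

lemma summable_pgf_terms (ν : PMF ℕ) {x : ℝ} (h0 : 0 ≤ x) (h1 : x ≤ 1) :
    Summable (fun i : ℕ => (ν i).toReal * x ^ i) := by
  refine Summable.of_nonneg_of_le (fun i => mul_nonneg ENNReal.toReal_nonneg (pow_nonneg h0 i))
    (fun i => ?_) (summable_f ν)
  exact mul_le_of_le_one_right ENNReal.toReal_nonneg (pow_le_one₀ h0 h1)

lemma summable_pgf'_terms (ν : PMF ℕ) (hmom : ∑' i : ℕ, (i : ℝ≥0∞) ^ 2 * ν i ≠ ⊤)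
    {x : ℝ} (h0 : 0 ≤ x) (h1 : x ≤ 1) :
    Summable (fun i : ℕ => (ν i).toReal * i * x ^ (i - 1)) := by
  refine Summable.of_nonneg_of_le
    (fun i => mul_nonneg (mul_nonneg ENNReal.toReal_nonneg (Nat.cast_nonneg i)) (pow_nonneg h0 _))
    (fun i => ?_) (summable_fi ν hmom)
  exact mul_le_of_le_one_right (mul_nonneg ENNReal.toReal_nonneg (Nat.cast_nonneg i))
    (pow_le_one₀ h0 h1)

lemma pgf_nonneg (ν : PMF ℕ) {x : ℝ} (h0 : 0 ≤ x) : 0 ≤ pgf ν x :=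
  tsum_nonneg fun i => mul_nonneg ENNReal.toReal_nonneg (pow_nonneg h0 i)

lemma pgf_le_one (ν : PMF ℕ) {x : ℝ} (h0 : 0 ≤ x) (h1 : x ≤ 1) : pgf ν x ≤ 1 := by
  rw [pgf, ← tsum_f ν]
  exact Summable.tsum_le_tsum
    (fun i => mul_le_of_le_one_right ENNReal.toReal_nonneg (pow_le_one₀ h0 h1))
    (summable_pgf_terms ν h0 h1) (summable_f ν)

lemma pgf_one (ν : PMF ℕ) : pgf ν 1 = 1 := by
  simp only [pgf, one_pow, mul_one]; exact tsum_f ν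

lemma pgf'_nonneg (ν : PMF ℕ) {x : ℝ} (h0 : 0 ≤ x) : 0 ≤ pgf' ν x :=
  tsum_nonneg fun i => mul_nonneg (mul_nonneg ENNReal.toReal_nonneg (Nat.cast_nonneg i))
    (pow_nonneg h0 _)

lemma mean_nonneg (ν : PMF ℕ) : 0 ≤ mean ν :=
  tsum_nonneg fun i => mul_nonneg ENNReal.toReal_nonneg (Nat.cast_nonneg i)

lemma pgf'_le_mean (ν : PMF ℕ) (hmom : ∑' i : ℕ, (i : ℝ≥0∞) ^ 2 * ν i ≠ ⊤)
    {x : ℝ} (h0 : 0 ≤ x) (h1 : x ≤ 1) : pgf' ν x ≤ mean ν := by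
  rw [pgf', mean]
  exact Summable.tsum_le_tsum
    (fun i => mul_le_of_le_one_right
      (mul_nonneg ENNReal.toReal_nonneg (Nat.cast_nonneg i)) (pow_le_one₀ h0 h1))
    (summable_pgf'_terms ν hmom h0 h1) (summable_fi ν hmom)


lemma one_sub_pow_le (n : ℕ) {y : ℝ} (hy0 : 0 ≤ y) (hy1 : y ≤ 1) :
    1 - y ^ n ≤ n * (1 - y) := by
  induction n with
  | zero => simp
  | succ n ih =>
    have hyn : y ^ n ≤ 1 := pow_le_one₀ hy0 hy1
    have h1 : y * (1 - y ^ n) ≤ 1 - y ^ n := by nlinarith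
    have h2 : 1 - y ^ (n + 1) = (1 - y) + y * (1 - y ^ n) := by ring
    push_cast
    nlinarith

lemma pow_one_sub_le (n : ℕ) {t : ℝ} (ht0 : 0 ≤ t) (ht1 : t ≤ 1) :
    (1 - t) ^ n ≤ 1 - n * t + (n : ℝ) * n * t ^ 2 / 2 := by
  induction n with
  | zero => norm_num
  | succ n ih =>
    have h1 : (0:ℝ) ≤ 1 - t := by linarith
    have h2 := mul_le_mul_of_nonneg_right ih h1
    have h3 : (1 - t) ^ (n + 1) = (1 - t) ^ n * (1 - t) := by ring
    push_cast
    nlinarith [sq_nonneg t, mul_nonneg (mul_nonneg (sq_nonneg (n:ℝ)) ht0) (mul_nonneg ht0 ht0),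
      pow_nonneg ht0 3, mul_nonneg (sq_nonneg (n:ℝ)) (pow_nonneg ht0 3)]

lemma exp_neg_le {x : ℝ} (hx : 0 ≤ x) : Real.exp (-x) ≤ 1 - x + x ^ 2 := by
  have h1 : x + 1 ≤ Real.exp x := Real.add_one_le_exp x
  have h3 : 0 < Real.exp x := Real.exp_pos x
  have h4 : (0:ℝ) ≤ 1 - x + x ^ 2 := by nlinarith [sq_nonneg (2 * x - 1)]
  rw [Real.exp_neg, inv_le_iff_one_le_mul₀ h3]
  nlinarith [mul_le_mul_of_nonneg_left h1 h4, pow_nonneg hx 3]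


lemma one_sub_pgf_eq (ν : PMF ℕ) {t : ℝ} (hy0 : (0:ℝ) ≤ 1 - t) (hy1 : (1:ℝ) - t ≤ 1) :
    1 - pgf ν (1 - t) = ∑' i : ℕ, ((ν i).toReal - (ν i).toReal * (1 - t) ^ i) := by
  rw [Summable.tsum_sub (summable_f ν) (summable_pgf_terms ν hy0 hy1), tsum_f, pgf]

lemma one_sub_pgf_le (ν : PMF ℕ) (hmom : ∑' i : ℕ, (i : ℝ≥0∞) ^ 2 * ν i ≠ ⊤)
    {t : ℝ} (ht0 : 0 ≤ t) (ht1 : t ≤ 1) : 1 - pgf ν (1 - t) ≤ mean ν * t := by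
  have hy0 : (0:ℝ) ≤ 1 - t := by linarith
  have hy1 : (1:ℝ) - t ≤ 1 := by linarith
  have hr : mean ν * t = ∑' i : ℕ, (ν i).toReal * i * t := by rw [mean, tsum_mul_right]
  rw [one_sub_pgf_eq ν hy0 hy1, hr]
  refine Summable.tsum_le_tsum (fun i => ?_) ((summable_f ν).sub (summable_pgf_terms ν hy0 hy1))
    ((summable_fi ν hmom).mul_right t)
  have h := one_sub_pow_le i hy0 hy1
  have h2 : (1:ℝ) - (1 - t) = t := by ring
  rw [h2] at h
  nlinarith [ENNReal.toReal_nonneg (a := ν i)]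

lemma one_sub_pgf_ge (ν : PMF ℕ) (hmom : ∑' i : ℕ, (i : ℝ≥0∞) ^ 2 * ν i ≠ ⊤)
    {t : ℝ} (ht0 : 0 ≤ t) (ht1 : t ≤ 1) :
    mean ν * t - (∑' i : ℕ, (ν i).toReal * i * i) * t ^ 2 / 2 ≤ 1 - pgf ν (1 - t) := by
  have hy0 : (0:ℝ) ≤ 1 - t := by linarith
  have hy1 : (1:ℝ) - t ≤ 1 := by linarith
  have hsub : ∑' i : ℕ, ((ν i).toReal * i * t - (ν i).toReal * i * i * (t ^ 2 / 2))
      = mean ν * t - (∑' i : ℕ, (ν i).toReal * i * i) * t ^ 2 / 2 := by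
    rw [Summable.tsum_sub ((summable_fi ν hmom).mul_right t) ((summable_fii ν hmom).mul_right (t ^ 2 / 2)),
      tsum_mul_right, tsum_mul_right, mean]
    ring
  rw [one_sub_pgf_eq ν hy0 hy1, ← hsub]
  refine Summable.tsum_le_tsum (fun i => ?_)
    (((summable_fi ν hmom).mul_right t).sub ((summable_fii ν hmom).mul_right (t ^ 2 / 2)))
    ((summable_f ν).sub (summable_pgf_terms ν hy0 hy1))
  have h := pow_one_sub_le i ht0 ht1
  nlinarith [ENNReal.toReal_nonneg (a := ν i)]

lemma pgf_zero_of_support3 (ν : PMF ℕ) (hz : ∀ i : ℕ, i < 3 → ν i = 0) : pgf ν 0 = 0 := by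
  rw [pgf]
  have h : ∀ i : ℕ, (ν i).toReal * (0:ℝ) ^ i = 0 := by
    intro i
    rcases Nat.eq_zero_or_pos i with h | h
    · subst h; simp [hz 0 (by norm_num)]
    · simp [zero_pow (Nat.pos_iff_ne_zero.mp h)]
  rw [tsum_congr h, tsum_zero]

lemma pgf'_zero_of_support3 (ν : PMF ℕ) (hz : ∀ i : ℕ, i < 3 → ν i = 0) : pgf' ν 0 = 0 := by
  rw [pgf']
  have h : ∀ i : ℕ, (ν i).toReal * i * (0:ℝ) ^ (i - 1) = 0 := by
    intro i
    rcases lt_or_ge i 3 with h | h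
    · simp [hz i h]
    · have : i - 1 ≠ 0 := by omega
      simp [zero_pow this]
  rw [tsum_congr h, tsum_zero]

lemma mean_ge_three_of_support3 (ν : PMF ℕ) (hz : ∀ i : ℕ, i < 3 → ν i = 0)
    (hmom : ∑' i : ℕ, (i : ℝ≥0∞) ^ 2 * ν i ≠ ⊤) : 3 ≤ mean ν := by
  have h1 : (3:ℝ) = ∑' i : ℕ, 3 * (ν i).toReal := by
    rw [tsum_mul_left, tsum_f]; ring
  rw [h1, mean]
  refine Summable.tsum_le_tsum (fun i => ?_) ((summable_f ν).mul_left 3) (summable_fi ν hmom)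
  rcases lt_or_ge i 3 with h | h
  · simp [hz i h]
  · have h3 : (3:ℝ) ≤ i := by exact_mod_cast h
    nlinarith [ENNReal.toReal_nonneg (a := ν i)]

lemma pgf'_le_sq_of_support3 (ν : PMF ℕ) (hz : ∀ i : ℕ, i < 3 → ν i = 0)
    (hmom : ∑' i : ℕ, (i : ℝ≥0∞) ^ 2 * ν i ≠ ⊤)
    {x : ℝ} (h0 : 0 ≤ x) (h1 : x ≤ 1) : pgf' ν x ≤ mean ν * x ^ 2 := by
  have hr : mean ν * x ^ 2 = ∑' i : ℕ, (ν i).toReal * i * x ^ 2 := by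
    rw [mean, tsum_mul_right]
  rw [pgf', hr]
  refine Summable.tsum_le_tsum (fun i => ?_) (summable_pgf'_terms ν hmom h0 h1)
    ((summable_fi ν hmom).mul_right (x ^ 2))
  rcases lt_or_ge i 3 with h | h
  · simp [hz i h]
  · have hpow : x ^ (i - 1) ≤ x ^ 2 := pow_le_pow_of_le_one h0 h1 (by omega)
    have hnn : (0:ℝ) ≤ (ν i).toReal * i :=
      mul_nonneg ENNReal.toReal_nonneg (Nat.cast_nonneg i)
    exact mul_le_mul_of_nonneg_left hpow hnn

lemma pgf_le_pgf'_of_support3 (ν : PMF ℕ) (hz : ∀ i : ℕ, i < 3 → ν i = 0)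
    (hmom : ∑' i : ℕ, (i : ℝ≥0∞) ^ 2 * ν i ≠ ⊤)
    {x : ℝ} (h0 : 0 ≤ x) (h1 : x ≤ 1) : pgf ν x ≤ x / 3 * pgf' ν x := by
  rw [pgf, pgf', ← tsum_mul_left]
  refine Summable.tsum_le_tsum (fun i => ?_) (summable_pgf_terms ν h0 h1)
    ((summable_pgf'_terms ν hmom h0 h1).mul_left (x / 3))
  rcases lt_or_ge i 3 with h | h
  · simp [hz i h]
  · have hx : x ^ i = x ^ (i - 1) * x := by
      rw [← pow_succ]; congr 1; omega
    rw [hx]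
    have hi3 : (3:ℝ) ≤ i := by exact_mod_cast h
    have key : 0 ≤ (ν i).toReal * x ^ (i - 1) * x * ((i:ℝ) - 3) :=
      mul_nonneg (mul_nonneg (mul_nonneg ENNReal.toReal_nonneg (pow_nonneg h0 _)) h0)
        (by linarith)
    nlinarith [key]


lemma continuousOn_pgf (ν : PMF ℕ) : ContinuousOn (pgf ν) (Set.Icc (0:ℝ) 1) := by
  unfold pgf
  refine continuousOn_tsum (fun i => (continuous_const.mul (continuous_pow i)).continuousOn)
    (summable_f ν) ?_
  intro n x hx
  rw [Real.norm_eq_abs, abs_mul, abs_of_nonneg ENNReal.toReal_nonneg, abs_pow]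
  refine mul_le_of_le_one_right ENNReal.toReal_nonneg (pow_le_one₀ (abs_nonneg x) ?_)
  rw [abs_le]; exact ⟨by linarith [hx.1], hx.2⟩

lemma continuousOn_pgf' (ν : PMF ℕ) (hmom : ∑' i : ℕ, (i : ℝ≥0∞) ^ 2 * ν i ≠ ⊤) :
    ContinuousOn (pgf' ν) (Set.Icc (0:ℝ) 1) := by
  unfold pgf'
  refine continuousOn_tsum
    (fun i => ((continuous_const.mul continuous_const).mul (continuous_pow (i - 1))).continuousOn)
    (summable_fi ν hmom) ?_
  intro n x hx
  rw [Real.norm_eq_abs, abs_mul, abs_mul, abs_of_nonneg ENNReal.toReal_nonneg,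
    abs_of_nonneg (Nat.cast_nonneg (α := ℝ) n), abs_pow]
  refine mul_le_of_le_one_right (mul_nonneg ENNReal.toReal_nonneg (Nat.cast_nonneg n))
    (pow_le_one₀ (abs_nonneg x) ?_)
  rw [abs_le]; exact ⟨by linarith [hx.1], hx.2⟩

lemma continuousOn_Phi (νd νk : PMF ℕ) (hz : ∀ i : ℕ, i < 3 → νk i = 0)
    (hmomk : ∑' i : ℕ, (i : ℝ≥0∞) ^ 2 * νk i ≠ ⊤) :
    ContinuousOn (Phi νd νk) (Set.Icc (0:ℝ) 1) := by
  have hk3 : (3:ℝ) ≤ mean νk := mean_ge_three_of_support3 νk hz hmomk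
  have hkpos : (0:ℝ) < mean νk := by linarith
  have hmaps : Set.MapsTo (fun z : ℝ => 1 - pgf' νk z / mean νk)
      (Set.Icc (0:ℝ) 1) (Set.Icc (0:ℝ) 1) := by
    intro z hz'
    have h1 : 0 ≤ pgf' νk z := pgf'_nonneg νk hz'.1
    have h2 : pgf' νk z ≤ mean νk := pgf'_le_mean νk hmomk hz'.1 hz'.2
    constructor
    · have : pgf' νk z / mean νk ≤ 1 := (div_le_one hkpos).2 h2
      simpa using by linarith [this]
    · have : 0 ≤ pgf' νk z / mean νk := div_nonneg h1 hkpos.le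
      simpa using by linarith [this]
  unfold Phi
  refine ContinuousOn.sub ?_ (continuousOn_const.mul (ContinuousOn.sub
    (ContinuousOn.sub continuousOn_const (continuousOn_pgf νk))
    ((continuousOn_const.sub continuousOn_id).mul (continuousOn_pgf' νk hmomk))))
  exact (continuousOn_pgf νd).comp
    (continuousOn_const.sub ((continuousOn_pgf' νk hmomk).div_const _)) hmaps


end DegreeModel

open DegreeModel

set_option maxHeartbeats 2000000 in
/-- Let `d ≥ 0` and `k ≥ 3` be integer-valued random variables
with `E[d²] + E[k²] < ∞`, and suppose `Φ(z) < Φ(0)` for all `0 < z ≤ 1`.  Then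
there exists `δ₀ > 0` such that for all `0 < δ < δ₀`,
`max_{(α,β)∈[0,1]²} Φ̃_δ(α,β) = Φ̃_δ(0,0) = 1 − d/k − δ`. -/
theorem stmt6 (νd νk : PMF ℕ)
    (hmomd : ∑' i : ℕ, (i : ℝ≥0∞) ^ 2 * νd i ≠ ⊤)
    (hmomk : ∑' i : ℕ, (i : ℝ≥0∞) ^ 2 * νk i ≠ ⊤)
    (hk3 : ∀ i ∈ νk.support, 3 ≤ i)
    (hstar : ∀ z : ℝ, 0 < z → z ≤ 1 → Phi νd νk z < Phi νd νk 0) :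
    ∃ δ₀ : ℝ, 0 < δ₀ ∧ ∀ δ : ℝ, 0 < δ → δ < δ₀ →
      (∀ α ∈ Set.Icc (0 : ℝ) 1, ∀ β ∈ Set.Icc (0 : ℝ) 1,
        PhiTilde νd νk δ α β ≤ PhiTilde νd νk δ 0 0) ∧
      PhiTilde νd νk δ 0 0 = 1 - mean νd / mean νk - δ := by
  have hz : ∀ i : ℕ, i < 3 → νk i = 0 := by
    intro i hi
    by_contra h
    have := hk3 i (by simpa [PMF.mem_support_iff] using h)
    omega
  have hk3' : (3:ℝ) ≤ mean νk := mean_ge_three_of_support3 νk hz hmomk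
  have hkpos : (0:ℝ) < mean νk := by linarith
  have hPhi0 : Phi νd νk 0 = 1 - mean νd / mean νk := by
    rw [Phi, pgf_zero_of_support3 νk hz, pgf'_zero_of_support3 νk hz]
    norm_num [pgf_one νd]
  have hdpos : 0 < mean νd := by
    rcases (mean_nonneg νd).lt_or_eq with h | h
    · exact h
    · exfalso
      have hmean0 : mean νd = 0 := h.symm
      have hfz : ∀ j : ℕ, j ≠ 0 → (νd j).toReal = 0 := by
        intro j hj
        have hterm : (νd j).toReal * j ≤ 0 := by
          calc (νd j).toReal * j ≤ mean νd := by
                rw [mean]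
                exact Summable.le_tsum (summable_fi νd hmomd) j fun i _ =>
                  mul_nonneg ENNReal.toReal_nonneg (Nat.cast_nonneg i)
            _ = 0 := hmean0
        have hterm' : 0 ≤ (νd j).toReal * j :=
          mul_nonneg ENNReal.toReal_nonneg (Nat.cast_nonneg j)
        have hj' : (0:ℝ) < j := by exact_mod_cast Nat.pos_of_ne_zero hj
        have heq : (νd j).toReal * j = 0 := le_antisymm hterm hterm'
        rcases mul_eq_zero.mp heq with h' | h'
        · exact h'
        · exact absurd h' (ne_of_gt hj')
      have hpgf1 : ∀ y : ℝ, pgf νd y = 1 := by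
        intro y
        rw [pgf, tsum_eq_single 0 (fun i hi => by rw [hfz i hi]; ring)]
        have hf0 : (νd 0).toReal = 1 := by
          have h1 := tsum_f νd
          rwa [tsum_eq_single 0 (fun i hi => hfz i hi)] at h1
        simp [hf0]
      have hlt := hstar 1 one_pos le_rfl
      simp [Phi, hpgf1, hmean0] at hlt
  have hC2nn : 0 ≤ ∑' i : ℕ, (νd i).toReal * i * i :=
    tsum_nonneg fun i =>
      mul_nonneg (mul_nonneg ENNReal.toReal_nonneg (Nat.cast_nonneg i)) (Nat.cast_nonneg i)
  set C2 := ∑' i : ℕ, (νd i).toReal * i * i with hC2def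
  set α₁ : ℝ := min 1 (2 * mean νd / (3 * (C2 + 1))) with hα₁def
  have hα₁pos : 0 < α₁ := by
    refine lt_min one_pos (div_pos (by linarith) (by linarith))
  have hα₁le : α₁ ≤ 1 := min_le_left _ _
  obtain ⟨zs, hzsmem, hzsmax⟩ :=
    (isCompact_Icc (a := α₁) (b := 1)).exists_isMaxOn
      ⟨α₁, Set.mem_Icc.mpr ⟨le_refl α₁, hα₁le⟩⟩
      ((continuousOn_Phi νd νk hz hmomk).mono (Set.Icc_subset_Icc hα₁pos.le le_rfl))
  set ε₁ := Phi νd νk 0 - Phi νd νk zs with hε₁def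
  have hε₁pos : 0 < ε₁ :=
    sub_pos.2 (hstar zs (lt_of_lt_of_le hα₁pos hzsmem.1) hzsmem.2)
  have hq2 : (0:ℝ) < 1/(81*(mean νd)^2) :=
    div_pos one_pos (mul_pos (by norm_num) (pow_pos hdpos 2))
  refine ⟨min (min (1/9) (1/(81 * (mean νd)^2))) (ε₁/27),
    lt_min (lt_min (by norm_num) hq2) (div_pos hε₁pos (by norm_num)), ?_⟩
  intro δ hδ0 hδup
  have hδ9 : δ ≤ 1/9 := le_trans hδup.le (le_trans (min_le_left _ _) (min_le_left _ _))
  have hδd : δ ≤ 1/(81*(mean νd)^2) :=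
    le_trans hδup.le (le_trans (min_le_left _ _) (min_le_right _ _))
  have hδε : 27*δ ≤ ε₁ := by
    have := le_trans hδup.le (min_le_right _ _)
    linarith
  have hPT00 : PhiTilde νd νk δ 0 0 = 1 - mean νd / mean νk - δ := by
    rw [PhiTilde, hPhi0]
    norm_num [Real.exp_zero]
  refine ⟨?_, hPT00⟩
  rintro α ⟨hα0, hα1⟩ β ⟨hβ0, hβ1⟩
  rw [hPT00, PhiTilde, ← hPhi0]
  set t := pgf' νk α / mean νk with htdef
  set g := pgf νd (1 - t) with hgdef
  have hK'0 : 0 ≤ pgf' νk α := pgf'_nonneg νk hα0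
  have hK'k : pgf' νk α ≤ mean νk := pgf'_le_mean νk hmomk hα0 hα1
  have ht0 : 0 ≤ t := by rw [htdef]; exact div_nonneg hK'0 hkpos.le
  have ht1 : t ≤ 1 := by rw [htdef]; exact (div_le_one hkpos).2 hK'k
  have hy0 : (0:ℝ) ≤ 1 - t := by linarith
  have hy1 : (1:ℝ) - t ≤ 1 := by linarith
  have hg0 : 0 ≤ g := by rw [hgdef]; exact pgf_nonneg νd hy0
  have hg1 : g ≤ 1 := by rw [hgdef]; exact pgf_le_one νd hy0 hy1
  have hg1' : (0:ℝ) ≤ 1 - g := by linarith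
  have hΔ0 : Phi νd νk α ≤ Phi νd νk 0 := by
    rcases hα0.lt_or_eq with h | h
    · exact (hstar α h hα1).le
    · rw [← h]
  have hexp : Real.exp (-(3*δ*β^2)) ≤ 1 - 3*δ*β^2 + (3*δ*β^2)^2 :=
    exp_neg_le (by positivity)
  have hmain : (Real.exp (-(3*δ*β^2)) - 1) * g + 3*δ*β^2 - 2*δ*β^3
      ≤ 3*δ*β^2*(1-g) - δ*β^3 := by
    have h1 : (Real.exp (-(3*δ*β^2)) - 1) * g ≤ ((3*δ*β^2)^2 - 3*δ*β^2) * g := by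
      apply mul_le_mul_of_nonneg_right _ hg0
      linarith
    have h2 : (3*δ*β^2)^2 * g ≤ (3*δ*β^2)^2 :=
      mul_le_of_le_one_right (sq_nonneg (3*δ*β^2)) hg1
    have h9 : 9*δ*β ≤ 1 := by
      linarith [mul_nonneg hδ0.le (sub_nonneg.mpr hβ1), hδ9]
    have h3 : (3*δ*β^2)^2 ≤ δ*β^3 := by
      linarith [mul_nonneg (mul_nonneg hδ0.le (pow_nonneg hβ0 3)) (sub_nonneg.mpr h9)]
    linarith [h1, h2, h3]
  have hcore : 3*δ*β^2*(1-g) - δ*β^3 ≤ Phi νd νk 0 - Phi νd νk α := by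
    rcases le_or_gt (3*(1-g)) β with hc | hc
    · have h0 : (0:ℝ) ≤ δ*β^2 := by positivity
      have hA : 3*δ*β^2*(1-g) ≤ δ*β^3 := by
        have := mul_le_mul_of_nonneg_left hc h0
        linarith [this]
      linarith [sub_nonneg.2 hΔ0]
    · have hb2 : β^2 ≤ 9*(1-g)^2 := by
        linarith [mul_self_le_mul_self hβ0 hc.le]
      have h8 := mul_le_mul_of_nonneg_left hb2
        (mul_nonneg (by norm_num : (0:ℝ) ≤ 3) (mul_nonneg hδ0.le hg1'))
      have hh : 3*δ*β^2*(1-g) - δ*β^3 ≤ 27*δ*(1-g)^3 := by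
        linarith [h8, mul_nonneg hδ0.le (pow_nonneg hβ0 3)]
      rcases le_or_gt α α₁ with hcase | hcase
      · -- near zero
        have hK'sq : pgf' νk α ≤ mean νk * α^2 :=
          pgf'_le_sq_of_support3 νk hz hmomk hα0 hα1
        have htα : t ≤ α^2 := by
          rw [htdef, div_le_iff₀ hkpos]; linarith [hK'sq]
        have h1g : 1 - g ≤ mean νd * t := by
          have h := one_sub_pgf_le νd hmomd ht0 ht1
          rw [← hgdef] at h
          exact h
        have hlow : mean νd * t - C2 * t^2/2 ≤ 1 - g := by
          have h := one_sub_pgf_ge νd hmomd ht0 ht1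
          rw [← hgdef, ← hC2def] at h
          exact h
        have hKK : pgf νk α + (1-α) * pgf' νk α ≤ (1 - 2*α/3) * pgf' νk α := by
          have h := pgf_le_pgf'_of_support3 νk hz hmomk hα0 hα1
          linarith [h]
        have hcoef : 0 ≤ mean νd / mean νk := div_nonneg hdpos.le hkpos.le
        have h2 : (mean νd / mean νk) * (pgf νk α + (1-α)*pgf' νk α)
            ≤ mean νd * ((1-2*α/3)*t) := by
          have step := mul_le_mul_of_nonneg_left hKK hcoef
          have heq : (mean νd / mean νk) * ((1-2*α/3) * pgf' νk α)
              = mean νd * ((1-2*α/3)*t) := by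
            rw [htdef]
            field_simp [hkpos.ne']
          linarith [step, heq.le, heq.ge]
        have hexpand : Phi νd νk 0 - Phi νd νk α
            = (1 - g) - (mean νd / mean νk) * (pgf νk α + (1-α) * pgf' νk α) := by
          rw [hPhi0, Phi, ← htdef, ← hgdef]
          ring
        have h3' : C2 * t^2/2 ≤ mean νd/3 * (α*t) := by
          have ht2 : t^2 ≤ α^2 * t := by
            linarith [mul_le_mul_of_nonneg_right htα ht0]
          have h4 : C2/2 * α ≤ mean νd / 3 := by
            have hle : α ≤ 2 * mean νd / (3*(C2+1)) := le_trans hcase (min_le_right _ _)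
            have hC2p : (0:ℝ) < 3*(C2+1) := by linarith [hC2nn]
            have key : α * (3*(C2+1)) ≤ 2*mean νd := by
              rw [← le_div_iff₀ hC2p]; exact hle
            linarith [key, hα0]
          have h5 : C2 * t^2/2 ≤ C2/2*(α^2*t) := by
            linarith [mul_le_mul_of_nonneg_left ht2 (by linarith [hC2nn] : (0:ℝ) ≤ C2/2)]
          have h7 : (C2/2*α)*(α*t) ≤ (mean νd/3)*(α*t) :=
            mul_le_mul_of_nonneg_right h4 (mul_nonneg hα0 ht0)
          linarith [h5, h7]
        have hΔlow : mean νd/3 * (t*α) ≤ Phi νd νk 0 - Phi νd νk α := by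
          rw [hexpand]
          linarith [hlow, h2, h3']
        have h1g3 : (1-g)^3 ≤ (mean νd)^3 * (t*α) := by
          have h5 : (1-g)^3 ≤ (mean νd * t)^3 := pow_le_pow_left₀ hg1' h1g 3
          have h6 : t^2 ≤ α^4 := by linarith [mul_self_le_mul_self ht0 htα]
          have h7 : α^4 ≤ α := by
            have := pow_le_pow_of_le_one hα0 hα1 (by norm_num : 1 ≤ 4)
            simpa using this
          have ht3 : t^3 ≤ t*α := by
            linarith [mul_le_mul_of_nonneg_left h6 ht0, mul_le_mul_of_nonneg_left h7 ht0]
          linarith [h5, mul_le_mul_of_nonneg_left ht3 (pow_nonneg hdpos.le 3)]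
        have hd81 : 27*δ*(mean νd)^3 ≤ mean νd/3 := by
          have h81 : (0:ℝ) < 81*(mean νd)^2 := mul_pos (by norm_num) (pow_pos hdpos 2)
          have key : δ * (81*(mean νd)^2) ≤ 1 := by
            calc δ * (81*(mean νd)^2) ≤ (1/(81*(mean νd)^2)) * (81*(mean νd)^2) :=
                  mul_le_mul_of_nonneg_right hδd h81.le
              _ = 1 := by field_simp
          have hmul := mul_le_mul_of_nonneg_left key hdpos.le
          linarith [hmul]
        calc 3*δ*β^2*(1-g) - δ*β^3 ≤ 27*δ*(1-g)^3 := hh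
          _ ≤ 27*δ*((mean νd)^3*(t*α)) :=
              mul_le_mul_of_nonneg_left h1g3 (by positivity)
          _ = (27*δ*(mean νd)^3)*(t*α) := by ring
          _ ≤ (mean νd/3)*(t*α) :=
              mul_le_mul_of_nonneg_right hd81 (mul_nonneg ht0 hα0)
          _ ≤ Phi νd νk 0 - Phi νd νk α := hΔlow
      · -- far from zero
        have hmax : Phi νd νk α ≤ Phi νd νk zs :=
          (isMaxOn_iff.mp hzsmax) α (Set.mem_Icc.mpr ⟨hcase.le, hα1⟩)
        have h1g3 : (1-g)^3 ≤ 1 := pow_le_one₀ hg1' (by linarith)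
        have h27 : 27*δ*(1-g)^3 ≤ 27*δ := by
          linarith [mul_le_of_le_one_right (by positivity : (0:ℝ) ≤ 27*δ) h1g3]
        linarith [hh, hδε, hmax, h27]
  linarith [hmain, hcore]
end

section
/- Let the assumptions be as in the context, and suppose Φ(z) < Φ(0) for all 0 < z ≤ 1. Then there exists δ₀ > 0 such that for all 0 < δ < δ₀, the maximum of Φ̃_δ over the boundary of the square [0,1]² is attained at (0,0), i.e. max_{(α,β)∈∂[0,1]²} Φ̃_δ(α,β) = Φ̃_δ(0,0) = 1 − d/k − δ. -/
set_option maxHeartbeats 1000000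


open scoped ENNReal

open DegreeModel Set

namespace Stmt7Aux

lemma summable_pmf (ν : PMF ℕ) : Summable (fun i => (ν i).toReal) :=
  ENNReal.summable_toReal (by simp [ν.tsum_coe])

lemma tsum_pmf (ν : PMF ℕ) : ∑' i, (ν i).toReal = 1 := by
  rw [← ENNReal.tsum_toReal_eq (fun i => ν.apply_ne_top i), ν.tsum_coe, ENNReal.toReal_one]

lemma summable_series {c : ℕ → ℝ} (hc : ∀ i, 0 ≤ c i) (hs : Summable c) (e : ℕ → ℕ)
    {x : ℝ} (hx0 : 0 ≤ x) (hx1 : x ≤ 1) : Summable (fun i => c i * x ^ e i) := by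
  refine hs.of_nonneg_of_le (fun i => mul_nonneg (hc i) (pow_nonneg hx0 _)) (fun i => ?_)
  calc c i * x ^ e i ≤ c i * 1 :=
        mul_le_mul_of_nonneg_left (pow_le_one₀ hx0 hx1) (hc i)
    _ = c i := mul_one _

lemma tsum_series_nonneg {c : ℕ → ℝ} (hc : ∀ i, 0 ≤ c i) (e : ℕ → ℕ)
    {x : ℝ} (hx0 : 0 ≤ x) : 0 ≤ ∑' i, c i * x ^ e i :=
  tsum_nonneg (fun i => mul_nonneg (hc i) (pow_nonneg hx0 _))

lemma tsum_series_le {c : ℕ → ℝ} (hc : ∀ i, 0 ≤ c i) (hs : Summable c) (e : ℕ → ℕ)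
    {x : ℝ} (hx0 : 0 ≤ x) (hx1 : x ≤ 1) : ∑' i, c i * x ^ e i ≤ ∑' i, c i := by
  refine Summable.tsum_le_tsum (fun i => ?_) (summable_series hc hs e hx0 hx1) hs
  calc c i * x ^ e i ≤ c i * 1 :=
        mul_le_mul_of_nonneg_left (pow_le_one₀ hx0 hx1) (hc i)
    _ = c i := mul_one _

lemma contOn_series {c : ℕ → ℝ} (hc : ∀ i, 0 ≤ c i) (hs : Summable c) (e : ℕ → ℕ) :
    ContinuousOn (fun x : ℝ => ∑' i, c i * x ^ e i) (Icc (-1 : ℝ) 1) := by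
  refine continuousOn_tsum (f := fun i x => c i * x ^ e i) (u := c)
    (fun i => (continuous_const.mul (continuous_pow _)).continuousOn) hs (fun n x hx => ?_)
  rw [Real.norm_eq_abs, abs_mul, abs_of_nonneg (hc n), abs_pow]
  calc c n * |x| ^ e n ≤ c n * 1 :=
        mul_le_mul_of_nonneg_left (pow_le_one₀ (abs_nonneg x) (abs_le.mpr ⟨hx.1, hx.2⟩)) (hc n)
    _ = c n := mul_one _

lemma exp_quad {x : ℝ} (h0 : 0 ≤ x) (h1 : x ≤ 1) :
    Real.exp (-x) - 1 + x ≤ x ^ 2 := by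
  have := Real.abs_exp_sub_one_sub_id_le (x := -x) (by rwa [abs_neg, abs_of_nonneg h0])
  rw [abs_le] at this
  nlinarith [this.2, sq_abs x]

end Stmt7Aux

open Stmt7Aux


/-- Let `d ≥ 0` and `k ≥ 3` be integer-valued random variables
with `E[d²] + E[k²] < ∞`, and suppose `Φ(z) < Φ(0)` for all `0 < z ≤ 1`.  Then
there exists `δ₀ > 0` such that for all `0 < δ < δ₀`, the maximum of `Φ̃_δ`
over the boundary of the square `[0,1]²` is attained at `(0,0)`, i.e.
`max_{(α,β)∈∂[0,1]²} Φ̃_δ(α,β) = Φ̃_δ(0,0) = 1 − d/k − δ`. -/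
theorem stmt7 (νd νk : PMF ℕ)
    (hmomd : ∑' i : ℕ, (i : ℝ≥0∞) ^ 2 * νd i ≠ ⊤)
    (hmomk : ∑' i : ℕ, (i : ℝ≥0∞) ^ 2 * νk i ≠ ⊤)
    (hk3 : ∀ i ∈ νk.support, 3 ≤ i)
    (hstar : ∀ z : ℝ, 0 < z → z ≤ 1 → Phi νd νk z < Phi νd νk 0) :
    ∃ δ₀ : ℝ, 0 < δ₀ ∧ ∀ δ : ℝ, 0 < δ → δ < δ₀ →
      (∀ α ∈ Set.Icc (0 : ℝ) 1, ∀ β ∈ Set.Icc (0 : ℝ) 1,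
        (α = 0 ∨ α = 1 ∨ β = 0 ∨ β = 1) →
          PhiTilde νd νk δ α β ≤ PhiTilde νd νk δ 0 0) ∧
      PhiTilde νd νk δ 0 0 = 1 - mean νd / mean νk - δ := by
  classical
  -- coefficients
  set ak : ℕ → ℝ := fun i => (νk i).toReal with hak
  set ad : ℕ → ℝ := fun i => (νd i).toReal with had
  have hak0 : ∀ i, 0 ≤ ak i := fun i => ENNReal.toReal_nonneg
  have had0 : ∀ i, 0 ≤ ad i := fun i => ENNReal.toReal_nonneg
  have haks : Summable ak := summable_pmf νk
  have hads : Summable ad := summable_pmf νd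
  -- second moment summability for νk
  have hsq : Summable (fun i : ℕ => (i : ℝ) ^ 2 * ak i) := by
    have h := ENNReal.summable_toReal hmomk
    refine h.congr fun i => ?_
    simp [hak, ENNReal.toReal_mul, ENNReal.toReal_pow]
  have hcsum : Summable (fun i : ℕ => ak i * i) := by
    refine Summable.of_nonneg_of_le (fun i => mul_nonneg (hak0 i) (Nat.cast_nonneg i))
      (fun i => ?_) (hsq.add haks)
    have h1 : (0:ℝ) ≤ ak i := hak0 i
    have h2 : (0:ℝ) ≤ (i:ℝ) := Nat.cast_nonneg i
    nlinarith [mul_nonneg h1 (sq_nonneg ((i:ℝ) - 1)), mul_nonneg h1 h2]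
  -- νk has no mass at 0 or 1
  have hνk0 : ak 0 = 0 := by
    by_cases h : νk 0 = 0
    · simp [hak, h]
    · exact absurd (hk3 0 (PMF.mem_support_iff νk 0 |>.mpr h)) (by norm_num)
  have hνk1 : ak 1 = 0 := by
    by_cases h : νk 1 = 0
    · simp [hak, h]
    · exact absurd (hk3 1 (PMF.mem_support_iff νk 1 |>.mpr h)) (by norm_num)
  -- values at the endpoints
  have hK0 : pgf νk 0 = 0 := by
    unfold pgf
    convert tsum_zero with i
    cases i with
    | zero => simpa using hνk0
    | succ n => simp
  have hK'0 : pgf' νk 0 = 0 := by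
    unfold pgf'
    convert tsum_zero with i
    match i with
    | 0 => simp
    | 1 => simpa using hνk1
    | (n+2) => simp
  have hD1 : pgf νd 1 = 1 := by
    unfold pgf
    simp only [one_pow, mul_one]
    exact tsum_pmf νd
  -- the mean of νk is at least 3
  have hmean3 : (3:ℝ) ≤ mean νk := by
    have h := Summable.tsum_le_tsum (f := fun i => 3 * ak i) (g := fun i => ak i * i)
      (fun i => ?_) (haks.mul_left 3) hcsum
    · rw [tsum_mul_left, tsum_pmf νk, mul_one] at h
      exact h
    · by_cases hz : νk i = 0
      · simp [hak, hz]
      · have h3 : (3:ℝ) ≤ (i:ℝ) := by exact_mod_cast hk3 i (PMF.mem_support_iff νk i |>.mpr hz)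
        calc 3 * ak i ≤ (i:ℝ) * ak i := mul_le_mul_of_nonneg_right h3 (hak0 i)
          _ = ak i * i := mul_comm _ _
  have hkpos : (0:ℝ) < mean νk := lt_of_lt_of_le (by norm_num) hmean3
  -- bounds for pgf' νk on [0,1]
  have hK'nonneg : ∀ x : ℝ, 0 ≤ x → 0 ≤ pgf' νk x := fun x hx =>
    tsum_series_nonneg (c := fun i => ak i * i)
      (fun i => mul_nonneg (hak0 i) (Nat.cast_nonneg i)) (fun i => i - 1) hx
  have hK'le : ∀ x : ℝ, 0 ≤ x → x ≤ 1 → pgf' νk x ≤ mean νk := fun x hx0 hx1 =>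
    tsum_series_le (c := fun i => ak i * i)
      (fun i => mul_nonneg (hak0 i) (Nat.cast_nonneg i)) hcsum (fun i => i - 1) hx0 hx1
  -- the D-composite G
  set G : ℝ → ℝ := fun α => pgf νd (1 - pgf' νk α / mean νk) with hGdef
  have hinner_mem : ∀ x ∈ Icc (0:ℝ) 1, (1 - pgf' νk x / mean νk) ∈ Icc (0:ℝ) 1 := by
    intro x hx
    constructor
    · have := hK'le x hx.1 hx.2
      have : pgf' νk x / mean νk ≤ 1 := (div_le_one hkpos).mpr this
      linarith
    · have := hK'nonneg x hx.1
      have : 0 ≤ pgf' νk x / mean νk := div_nonneg this hkpos.le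
      linarith
  have hG0 : G 0 = 1 := by
    rw [hGdef]
    simp only [hK'0, zero_div, sub_zero]
    exact hD1
  have hGnonneg : ∀ x ∈ Icc (0:ℝ) 1, 0 ≤ G x := by
    intro x hx
    exact tsum_series_nonneg had0 (fun i => i) (hinner_mem x hx).1
  have hGle1 : ∀ x ∈ Icc (0:ℝ) 1, G x ≤ 1 := by
    intro x hx
    have := tsum_series_le had0 hads (fun i => i) (hinner_mem x hx).1 (hinner_mem x hx).2
    rwa [tsum_pmf νd] at this
  -- continuity
  have h01 : Icc (0:ℝ) 1 ⊆ Icc (-1:ℝ) 1 := Icc_subset_Icc (by norm_num) le_rfl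
  have hsub : Icc (0:ℝ) 1 ⊆ Icc (-1:ℝ) 1 := h01
  have contD : ContinuousOn (pgf νd) (Icc (-1:ℝ) 1) :=
    contOn_series had0 hads (fun i => i)
  have contK : ContinuousOn (pgf νk) (Icc (-1:ℝ) 1) :=
    contOn_series hak0 haks (fun i => i)
  have contK' : ContinuousOn (pgf' νk) (Icc (-1:ℝ) 1) :=
    contOn_series (c := fun i => ak i * i)
      (fun i => mul_nonneg (hak0 i) (Nat.cast_nonneg i)) hcsum (fun i => i - 1)
  have continner : ContinuousOn (fun x : ℝ => 1 - pgf' νk x / mean νk) (Icc (0:ℝ) 1) :=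
    continuousOn_const.sub ((contK'.mono h01).div_const _)
  have hGcont : ContinuousOn G (Icc (0:ℝ) 1) := by
    refine contD.comp continner ?_
    intro x hx
    exact h01 (hinner_mem x hx)
  have hPhicont : ContinuousOn (Phi νd νk) (Icc (0:ℝ) 1) := by
    have : ContinuousOn (fun z : ℝ =>
        G z - (mean νd / mean νk) * (1 - pgf νk z - (1 - z) * pgf' νk z)) (Icc (0:ℝ) 1) := by
      refine hGcont.sub (continuousOn_const.mul ?_)
      exact (continuousOn_const.sub (contK.mono h01)).sub
        ((continuousOn_const.sub continuousOn_id).mul (contK'.mono h01))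
    exact this
  -- pick ε so that G ≥ 5/6 near 0
  have hGtend : Filter.Tendsto G (nhdsWithin 0 (Icc (0:ℝ) 1)) (nhds 1) := by
    have h := hGcont 0 ⟨le_refl 0, zero_le_one⟩
    rwa [ContinuousWithinAt, hG0] at h
  have hev : ∀ᶠ α in nhdsWithin 0 (Icc (0:ℝ) 1), (5/6 : ℝ) < G α :=
    hGtend.eventually_const_lt (by norm_num)
  obtain ⟨ε, hεpos, hε⟩ := Metric.mem_nhdsWithin_iff.mp hev
  set ε₂ : ℝ := min ε 1 with hε₂def
  have hε₂pos : 0 < ε₂ := lt_min hεpos one_pos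
  have hε₂le1 : ε₂ ≤ 1 := min_le_right _ _
  -- max of Phi on [ε₂, 1]
  obtain ⟨z₀, hz₀mem, hz₀max⟩ := (isCompact_Icc (a := ε₂) (b := 1)).exists_isMaxOn
    (nonempty_Icc.mpr hε₂le1) (hPhicont.mono (Icc_subset_Icc hε₂pos.le le_rfl))
  have hz₀lt : Phi νd νk z₀ < Phi νd νk 0 :=
    hstar z₀ (lt_of_lt_of_le hε₂pos hz₀mem.1) hz₀mem.2
  -- choose δ₀
  refine ⟨min (Phi νd νk 0 - Phi νd νk z₀) (1/5), lt_min (by linarith) (by norm_num), ?_⟩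
  intro δ hδ0 hδδ₀
  have hδc : δ < Phi νd νk 0 - Phi νd νk z₀ := lt_of_lt_of_le hδδ₀ (min_le_left _ _)
  have hδ5 : δ < 1/5 := lt_of_lt_of_le hδδ₀ (min_le_right _ _)
  -- value at (0,0)
  have hPhi0 : Phi νd νk 0 = 1 - mean νd / mean νk := by
    unfold Phi
    rw [hK0, hK'0]
    simp only [zero_div, sub_zero, mul_zero, mul_one]
    rw [hD1]
  have hPT00 : PhiTilde νd νk δ 0 0 = 1 - mean νd / mean νk - δ := by
    unfold PhiTilde
    rw [hK'0]
    simp only [zero_div, sub_zero, hD1]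
    rw [hPhi0]
    norm_num
  refine ⟨?_, hPT00⟩
  intro α hα β hβ hbd
  rw [hPT00, ← hPhi0]
  -- basic facts
  have hPle : Phi νd νk α ≤ Phi νd νk 0 := by
    rcases eq_or_lt_of_le hα.1 with h | h
    · rw [← h]
    · exact (hstar α h hα.2).le
  have hβ0 := hβ.1
  have hβ1 := hβ.2
  have hEneg : Real.exp (-(3 * δ * β ^ 2)) - 1 ≤ 0 := by
    have : Real.exp (-(3 * δ * β ^ 2)) ≤ 1 := by
      rw [Real.exp_le_one_iff]
      nlinarith
    linarith
  have hPTα : PhiTilde νd νk δ α β =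
      Phi νd νk α + (Real.exp (-(3 * δ * β ^ 2)) - 1) * G α - δ + 3 * δ * β ^ 2 - 2 * δ * β ^ 3 :=
    rfl
  rw [hPTα]
  rcases eq_or_ne β 0 with hB | hB
  · -- Case A : β = 0
    subst hB
    simp only [ne_eq, OfNat.ofNat_ne_zero, not_false_eq_true, zero_pow, mul_zero, neg_zero,
      Real.exp_zero, sub_self, zero_mul]
    linarith
  rcases eq_or_ne α 0 with hA | hA
  · -- Case B : α = 0
    subst hA
    rw [hG0]
    have hx0 : 0 ≤ 3 * δ * β ^ 2 := by positivity
    have hx1 : 3 * δ * β ^ 2 ≤ 1 := by nlinarith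
    have hq := exp_quad hx0 hx1
    have hb3 : 0 ≤ δ * β ^ 3 * (2 - 9 * δ * β) := by
      have : 0 ≤ 2 - 9 * δ * β := by nlinarith
      positivity
    nlinarith [hq, hb3]
  by_cases hD : ε₂ ≤ α
  · -- Case D : α ∈ [ε₂, 1]
    have hPz : Phi νd νk α ≤ Phi νd νk z₀ := hz₀max ⟨hD, hα.2⟩
    have hEG : (Real.exp (-(3 * δ * β ^ 2)) - 1) * G α ≤ 0 :=
      mul_nonpos_of_nonpos_of_nonneg hEneg (hGnonneg α hα)
    have hcube : 0 ≤ (1 - β) ^ 2 * (1 + 2 * β) := by positivity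
    nlinarith [hEG, hPz, hcube]
  · -- remaining : β = 1 and α < ε₂
    push_neg at hD
    have hB1 : β = 1 := by
      rcases hbd with h | h | h | h
      · exact absurd h hA
      · exfalso; rw [h] at hD; exact absurd hε₂le1 (not_le_of_gt hD)
      · exact absurd h hB
      · exact h
    subst hB1
    have hG56 : (5/6 : ℝ) ≤ G α := by
      have hdist : dist α 0 < ε := by
        rw [Real.dist_eq, sub_zero, abs_of_nonneg hα.1]
        exact lt_of_lt_of_le hD (min_le_left _ _)
      exact (hε ⟨Metric.mem_ball.mpr hdist, hα⟩).le
    have hx0 : 0 ≤ 3 * δ := by linarith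
    have hx1 : 3 * δ ≤ 1 := by linarith
    have hq := exp_quad hx0 hx1
    have hEneg' : Real.exp (-(3 * δ)) - 1 ≤ 0 := by
      have : Real.exp (-(3 * δ)) ≤ 1 := by
        rw [Real.exp_le_one_iff]; linarith
      linarith
    have hprod : 0 ≤ (G α - 5/6) * (-(Real.exp (-(3 * δ)) - 1)) :=
      mul_nonneg (by linarith) (by linarith)
    simp only [one_pow, mul_one]
    nlinarith [hq, hprod, hPle]
end

section
/- Let the assumptions be as in the context and let δ > 0. If (α,β) ∈ (0,1)² satisfies 1 − β = exp(−3δβ²)·D(1 − K'(α)/k), then Φ̃_δ(α,β) ≤ Φ(α) − δ + δβ³. -/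
open scoped ENNReal

open DegreeModel

/-- Let `d ≥ 0` and `k ≥ 3` be integer-valued random variables
with `E[d²] + E[k²] < ∞` and let `δ > 0`.  If `(α,β) ∈ (0,1)²` satisfies
`1 − β = exp(−3δβ²)·D(1 − K'(α)/k)`, then `Φ̃_δ(α,β) ≤ Φ(α) − δ + δβ³`. -/
theorem stmt9 (νd νk : PMF ℕ)
    (hmomd : ∑' i : ℕ, (i : ℝ≥0∞) ^ 2 * νd i ≠ ⊤)
    (hmomk : ∑' i : ℕ, (i : ℝ≥0∞) ^ 2 * νk i ≠ ⊤)
    (hk3 : ∀ i ∈ νk.support, 3 ≤ i)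
    (δ : ℝ) (hδ : 0 < δ) (α β : ℝ)
    (hα : α ∈ Set.Ioo (0 : ℝ) 1) (hβ : β ∈ Set.Ioo (0 : ℝ) 1)
    (hfix : 1 - β = Real.exp (-(3 * δ * β ^ 2)) * pgf νd (1 - pgf' νk α / mean νk)) :
    PhiTilde νd νk δ α β ≤ Phi νd νk α - δ + δ * β ^ 3 := by
  set x : ℝ := 3 * δ * β ^ 2 with hx
  have hxpos : 0 ≤ x := by positivity
  have hexp : Real.exp (-x) ≠ 0 := Real.exp_ne_zero _
  have hD : pgf νd (1 - pgf' νk α / mean νk) = (1 - β) * Real.exp x := by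
    have := hfix
    field_simp [Real.exp_neg] at this ⊢
    rw [this, mul_comm (Real.exp (-x)), mul_assoc, ← Real.exp_add, neg_add_cancel, Real.exp_zero, mul_one]
  have h1β : 0 < 1 - β := by linarith [hβ.2]
  have hkey : x ≤ Real.exp x - 1 := by
    have := Real.add_one_le_exp x; linarith
  have : (Real.exp (-x) - 1) * pgf νd (1 - pgf' νk α / mean νk)
      = (1 - β) * (1 - Real.exp x) := by
    rw [hD, Real.exp_neg]
    field_simp
  unfold PhiTilde
  rw [this]
  nlinarith [mul_le_mul_of_nonneg_left hkey (le_of_lt h1β), hβ.1, hβ.2, sq_nonneg β,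
    mul_pos hδ (mul_pos (mul_pos hβ.1 hβ.1) h1β)]
end

section
/- For any prime power q and any χ ∈ 𝔽_q*, the ℤ-module 𝔐_q(χ,χ,χ) possesses a ℤ-basis 𝔟₁,…,𝔟_{q−1} of vectors with non-negative integer entries such that for every 1 ≤ i ≤ q−1 one has ‖𝔟_i‖₁ ≤ 3 and Σ_{s∈𝔽_q*} 𝔟_{i,s}·s = 0 in 𝔽_q, and the (q−1)×(q−1) matrix with columns 𝔟₁,…,𝔟_{q−1} has determinant of absolute value q. Furthermore, for every integer k₀ > 3, 𝔐_q(χ,…,χ) with k₀ coefficients equals 𝔐_q(χ,χ,χ). -/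
set_option linter.unusedSectionVars false


namespace FreqModule

variable (F : Type) [Field F] [Fintype F] [DecidableEq F]

/-- The frequency vector `σ̂ ∈ ℤ^{𝔽_q*}` of an assignment `σ ∈ 𝔽_q^{k₀}`:
`σ̂_s = |{i : σ_i = s}|` for `s ∈ 𝔽_q* = 𝔽_q ∖ {0}`. -/
def freq (k₀ : ℕ) (σ : Fin k₀ → F) : {x : F // x ≠ 0} → ℤ :=
  fun s => ((Finset.univ.filter fun i => σ i = (s : F)).card : ℤ)

/-- The solution set `S_q(χ₁,…,χ_{k₀}) = {σ ∈ 𝔽_q^{k₀} : Σ χ_i σ_i = 0}`. -/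
def solSet (k₀ : ℕ) (χ : Fin k₀ → {x : F // x ≠ 0}) : Set (Fin k₀ → F) :=
  {σ | ∑ i, (χ i : F) * σ i = 0}

/-- The ℤ-module `𝔐_q(χ₁,…,χ_{k₀}) ⊆ ℤ^{𝔽_q*}` generated by the frequency
vectors of the solutions of the linear equation `Σ χ_i σ_i = 0`. -/
def freqModule (k₀ : ℕ) (χ : Fin k₀ → {x : F // x ≠ 0}) :
    Submodule ℤ ({x : F // x ≠ 0} → ℤ) :=
  Submodule.span ℤ (freq F k₀ '' solSet F k₀ χ)

end FreqModule

open FreqModule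

namespace Stmt10Aux

section Defs

variable (F : Type) [Field F] [Fintype F] [DecidableEq F]

/-- Indicator vector of a (possibly zero) field element, as a vector indexed by `F*`. -/
def delta (x : F) : {x : F // x ≠ 0} → ℤ := fun s => if x = (s : F) then 1 else 0

/-- The linear map `ℤ^{F*} → F`, `v ↦ Σ_s v_s • s`. -/
def phi : ({x : F // x ≠ 0} → ℤ) →ₗ[ℤ] F where
  toFun v := ∑ s : {x : F // x ≠ 0}, v s • (s : F)
  map_add' v w := by
    simp [add_smul, Finset.sum_add_distrib]
  map_smul' c v := by
    simp [mul_smul, Finset.smul_sum]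

end Defs

section Lemmas

variable {F : Type} [Field F] [Fintype F] [DecidableEq F]

lemma delta_zero : delta F (0 : F) = 0 := by
  funext s
  exact if_neg fun h => s.property h.symm

lemma phi_delta (x : F) : phi F (delta F x) = x := by
  by_cases hx : x = 0
  · subst hx; rw [delta_zero]; exact map_zero _
  · show (∑ s : {x : F // x ≠ 0}, (if x = (s : F) then (1:ℤ) else 0) • (s : F)) = x
    rw [Finset.sum_eq_single (⟨x, hx⟩ : {x : F // x ≠ 0})]
    · simp
    · intro s _ hne
      rw [if_neg fun h => hne (Subtype.ext h.symm), zero_smul]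
    · simp

lemma delta_nonneg (x : F) (s : {x : F // x ≠ 0}) : 0 ≤ delta F x s := by
  unfold delta; positivity

lemma sum_delta_natAbs_le' (w : F) : ∑ s : {x : F // x ≠ 0}, (delta F w s).natAbs ≤ 1 := by
  by_cases hw : w = 0
  · subst hw; simp [delta_zero]
  · have h : ∀ s : {x : F // x ≠ 0}, (delta F w s).natAbs = if s = ⟨w, hw⟩ then 1 else 0 := by
      intro s
      simp only [delta]
      by_cases h : w = (s : F)
      · rw [if_pos h, if_pos (Subtype.ext h.symm)]; rfl
      · rw [if_neg h, if_neg fun hs => h (by rw [hs])]; rfl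
    simp only [h]
    rw [Finset.sum_ite_eq' Finset.univ]
    simp

lemma sum_delta_natAbs_le (x y z : F) :
    ∑ s : {x : F // x ≠ 0}, ((delta F x + delta F y + delta F z) s).natAbs ≤ 3 := by
  have h : ∀ s : {x : F // x ≠ 0}, ((delta F x + delta F y + delta F z) s).natAbs
      = (delta F x s).natAbs + (delta F y s).natAbs + (delta F z s).natAbs := by
    intro s
    have hx := delta_nonneg x s
    have hy := delta_nonneg y s
    have hz := delta_nonneg z s
    simp only [Pi.add_apply]
    omega
  calc ∑ s : {x : F // x ≠ 0}, ((delta F x + delta F y + delta F z) s).natAbs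
      = (∑ s : {x : F // x ≠ 0}, (delta F x s).natAbs) +
        (∑ s : {x : F // x ≠ 0}, (delta F y s).natAbs) +
        (∑ s : {x : F // x ≠ 0}, (delta F z s).natAbs) := by
        simp only [h, Finset.sum_add_distrib]
    _ ≤ 1 + 1 + 1 :=
        add_le_add (add_le_add (sum_delta_natAbs_le' x) (sum_delta_natAbs_le' y))
          (sum_delta_natAbs_le' z)
    _ = 3 := rfl

/-- auxiliary: sum of an `if val = 0/1/2` function over `Fin k`. -/
lemma sum_ite_fin {M : Type*} [AddCommMonoid M] (k : ℕ) (hk : 3 ≤ k) (x y z : M) :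
    (∑ i : Fin k, (if (i : ℕ) = 0 then x else if (i : ℕ) = 1 then y else
      if (i : ℕ) = 2 then z else 0)) = x + y + z := by
  have h0 : 0 < k := by omega
  have h1 : 1 < k := by omega
  have h2 : 2 < k := by omega
  have hfun : ∀ i : Fin k, (if (i : ℕ) = 0 then x else if (i : ℕ) = 1 then y else
      if (i : ℕ) = 2 then z else 0)
      = (if i = ⟨0, h0⟩ then x else 0) + ((if i = ⟨1, h1⟩ then y else 0) +
        (if i = ⟨2, h2⟩ then z else 0)) := by
    intro i
    simp only [Fin.ext_iff]
    split_ifs <;> simp_all <;> omega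
  rw [Finset.sum_congr rfl fun i _ => hfun i]
  rw [Finset.sum_add_distrib, Finset.sum_add_distrib,
    Finset.sum_ite_eq' Finset.univ, Finset.sum_ite_eq' Finset.univ,
    Finset.sum_ite_eq' Finset.univ]
  simp [add_assoc]

lemma triple_mem_freqModule (χ : {x : F // x ≠ 0}) (k : ℕ) (hk : 3 ≤ k) (x y z : F)
    (hxyz : x + y + z = 0) :
    delta F x + delta F y + delta F z ∈ freqModule F k (fun _ => χ) := by
  set σ : Fin k → F := fun i => if (i : ℕ) = 0 then x else if (i : ℕ) = 1 then y else
    if (i : ℕ) = 2 then z else 0 with hσdef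
  have hσ : σ ∈ solSet F k (fun _ => χ) := by
    show (∑ i, (χ : F) * σ i) = 0
    rw [← Finset.mul_sum]
    rw [show (∑ i, σ i) = x + y + z from sum_ite_fin k hk x y z, hxyz, mul_zero]
  have hfreq : freq F k σ = delta F x + delta F y + delta F z := by
    funext s
    show ((Finset.univ.filter fun i => σ i = (s : F)).card : ℤ) = _
    rw [Finset.card_filter]
    push_cast
    have key : ∀ i : Fin k, (if σ i = (s : F) then (1:ℤ) else 0)
        = (if (i : ℕ) = 0 then delta F x s else if (i : ℕ) = 1 then delta F y s else
          if (i : ℕ) = 2 then delta F z s else 0) := by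
      intro i
      simp only [hσdef, delta]
      by_cases e0 : (i : ℕ) = 0
      · simp [e0]
      · by_cases e1 : (i : ℕ) = 1
        · simp [e0, e1]
        · by_cases e2 : (i : ℕ) = 2
          · simp [e0, e1, e2]
          · simp only [e0, e1, e2, if_false]
            exact if_neg fun hh => s.property hh.symm
    rw [Finset.sum_congr rfl fun i _ => key i, sum_ite_fin k hk]
    rfl
  rw [← hfreq]
  exact Submodule.subset_span ⟨σ, hσ, rfl⟩

lemma phi_freq (k : ℕ) (σ : Fin k → F) : phi F (freq F k σ) = ∑ i, σ i := by
  show (∑ s : {x : F // x ≠ 0}, (freq F k σ s) • (s : F)) = _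
  have h1 : ∀ s : {x : F // x ≠ 0},
      (freq F k σ s) • (s : F) = ∑ i : Fin k, if σ i = (s : F) then (s : F) else 0 := by
    intro s
    show (((Finset.univ.filter fun i => σ i = (s : F)).card : ℤ)) • (s : F) = _
    rw [Finset.card_filter]
    push_cast
    rw [Finset.sum_smul]
    refine Finset.sum_congr rfl fun i _ => ?_
    split_ifs <;> simp
  simp only [h1]
  rw [Finset.sum_comm]
  refine Finset.sum_congr rfl fun i _ => ?_
  by_cases h : σ i = 0
  · rw [h]
    exact Finset.sum_eq_zero fun s _ => if_neg fun hh => s.property hh.symm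
  · rw [Finset.sum_eq_single (⟨σ i, h⟩ : {x : F // x ≠ 0})]
    · simp
    · intro s _ hne
      exact if_neg fun hh => hne (Subtype.ext hh.symm)
    · simp

lemma freqModule_le_ker (χ : {x : F // x ≠ 0}) (k : ℕ) :
    freqModule F k (fun _ => χ) ≤ LinearMap.ker (phi F) := by
  rw [freqModule, Submodule.span_le]
  rintro v ⟨σ, hσ, rfl⟩
  simp only [SetLike.mem_coe, LinearMap.mem_ker]
  rw [phi_freq]
  have h : (χ : F) * ∑ i, σ i = 0 := by
    rw [Finset.mul_sum]; exact hσ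
  rcases mul_eq_zero.mp h with h | h
  · exact absurd h χ.property
  · exact h

lemma phi_surjective : Function.Surjective (phi F) := by
  intro x
  by_cases hx : x = 0
  · exact ⟨0, by simp [hx]⟩
  · exact ⟨delta F x, phi_delta x⟩

end Lemmas

section Det

variable {ι : Type} [Fintype ι] [DecidableEq ι]

/-- For a finite-index submodule `N` of `ℤ^ι` and a `ℤ`-linear equivalence
`e : ℤ^ι ≃ N`, the determinant of the composite `ℤ^ι ≃ N ↪ ℤ^ι` has absolute value the
index of `N`. -/
lemma natAbs_det_eq_card (N : Submodule ℤ (ι → ℤ)) (e : (ι → ℤ) ≃ₗ[ℤ] N)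
    (hfin : Nat.card ((ι → ℤ) ⧸ N) ≠ 0) :
    (LinearMap.det (N.subtype ∘ₗ (e : (ι → ℤ) →ₗ[ℤ] N))).natAbs
      = Nat.card ((ι → ℤ) ⧸ N) := by
  obtain ⟨m, snf⟩ := N.smithNormalForm (Pi.basisFun ℤ ι)
  have hidx : N.toAddSubgroup.index = Nat.card ((ι → ℤ) ⧸ N) := rfl
  have hprod := snf.toAddSubgroup_index_eq_pow_mul_prod
  have hle : m ≤ Fintype.card ι := by
    simpa using Fintype.card_le_of_embedding snf.f
  have hm : m = Fintype.card ι := by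
    by_contra hne
    apply hfin
    rw [← hidx, hprod, show Nat.card ℤ = 0 from Nat.card_eq_zero_of_infinite,
      zero_pow (by omega), zero_mul]
  have hidx2 : Nat.card ((ι → ℤ) ⧸ N) = ∏ i : Fin m, (snf.a i).natAbs := by
    rw [← hidx, hprod, show Fintype.card ι - m = 0 by omega, pow_zero, one_mul]
    refine Finset.prod_congr rfl fun i _ => ?_
    rw [Ideal.span_singleton_toAddSubgroup_eq_zmultiples, Int.index_zmultiples]
  have hbij : Function.Bijective snf.f :=
    (Fintype.bijective_iff_injective_and_card snf.f).mpr ⟨snf.f.injective, by simp [hm]⟩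
  set g : Fin m ≃ ι := Equiv.ofBijective snf.f hbij with hg
  set bN' : Module.Basis ι ℤ N := snf.bN.reindex g with hbN'
  have hbN'val : ∀ j : ι, (bN' j : ι → ℤ) = snf.a (g.symm j) • snf.bM j := by
    intro j
    rw [hbN', Module.Basis.reindex_apply, snf.snf]
    congr 1
    rw [show snf.f (g.symm j) = g (g.symm j) from rfl, Equiv.apply_symm_apply]
  set e' : (ι → ℤ) ≃ₗ[ℤ] N := snf.bM.equiv bN' (Equiv.refl ι) with he'
  have hassoc : Associated (LinearMap.det (N.subtype ∘ₗ (e : (ι → ℤ) →ₗ[ℤ] N)))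
      (LinearMap.det (N.subtype ∘ₗ (e' : (ι → ℤ) →ₗ[ℤ] N))) :=
    LinearMap.associated_det_comp_equiv _ _ _
  rw [Int.natAbs_eq_iff_associated.mpr hassoc]
  have hdet : LinearMap.toMatrix snf.bM snf.bM (N.subtype ∘ₗ (e' : (ι → ℤ) →ₗ[ℤ] N))
      = Matrix.diagonal fun j => snf.a (g.symm j) := by
    ext j1 j2
    rw [LinearMap.toMatrix_apply]
    have happ : (N.subtype ∘ₗ (e' : (ι → ℤ) →ₗ[ℤ] N)) (snf.bM j2)
        = snf.a (g.symm j2) • snf.bM j2 := by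
      rw [LinearMap.comp_apply, he', LinearEquiv.coe_coe, Module.Basis.equiv_apply, Equiv.refl_apply]
      exact hbN'val j2
    rw [happ, LinearEquiv.map_smul, Module.Basis.repr_self, Finsupp.smul_single, smul_eq_mul, mul_one]
    by_cases h : j1 = j2
    · subst h
      rw [Finsupp.single_eq_same, Matrix.diagonal_apply_eq]
    · rw [Finsupp.single_eq_of_ne h, Matrix.diagonal_apply_ne _ h]
  calc (LinearMap.det (N.subtype ∘ₗ (e' : (ι → ℤ) →ₗ[ℤ] N))).natAbs
      = (Matrix.diagonal fun j => snf.a (g.symm j)).det.natAbs := by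
        rw [← LinearMap.det_toMatrix snf.bM, hdet]
    _ = (∏ j : ι, snf.a (g.symm j)).natAbs := by rw [Matrix.det_diagonal]
    _ = ∏ j : ι, (snf.a (g.symm j)).natAbs := map_prod Int.natAbsHom _ _
    _ = ∏ i : Fin m, (snf.a i).natAbs := Equiv.prod_comp g.symm fun i => (snf.a i).natAbs
    _ = Nat.card ((ι → ℤ) ⧸ N) := hidx2.symm

end Det

section Core

variable {F : Type} [Field F] [Fintype F] [DecidableEq F]
variable (p n : ℕ) [Fact p.Prime] (co : F ≃+ (Fin n → ZMod p))

/-- The element of `F` with a single coordinate `a` in position `j`. -/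
def bas (j : Fin n) (a : ZMod p) : F := co.symm (Pi.single j a)

lemma co_bas (j : Fin n) (a : ZMod p) : co (bas p n co j a) = Pi.single j a := by
  simp [bas]

lemma bas_add (j : Fin n) (a b : ZMod p) :
    bas p n co j a + bas p n co j b = bas p n co j (a + b) := by
  simp [bas, ← map_add, Pi.single_add]

lemma bas_zero (j : Fin n) : bas p n co j 0 = 0 := by simp [bas]

lemma bas_neg (j : Fin n) (a : ZMod p) : -(bas p n co j a) = bas p n co j (-a) := by
  simp [bas, ← map_neg, Pi.single_neg]

lemma bas_ne_zero (j : Fin n) {a : ZMod p} (ha : a ≠ 0) : bas p n co j a ≠ 0 := by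
  simp only [bas, ne_eq, EmbeddingLike.map_eq_zero_iff]
  intro h
  exact ha (by simpa using congrFun h j)

/-- The support (set of nonzero coordinates) of an element of `F`. -/
def supp (s : F) : Finset (Fin n) := Finset.univ.filter fun j => co s j ≠ 0

lemma supp_nonempty {s : F} (hs : s ≠ 0) : (supp p n co s).Nonempty := by
  have h : co s ≠ 0 := fun h => hs (by simpa using congrArg co.symm h)
  obtain ⟨j, hj⟩ := Function.ne_iff.mp h
  exact ⟨j, Finset.mem_filter.mpr ⟨Finset.mem_univ j, hj⟩⟩

/-- The least nonzero coordinate position of a nonzero element. -/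
def piv (s : {x : F // x ≠ 0}) : Fin n :=
  (supp p n co (s : F)).min' (supp_nonempty p n co s.property)

/-- The leading coordinate of a nonzero element. -/
def lead (s : {x : F // x ≠ 0}) : ZMod p := co (s : F) (piv p n co s)

lemma lead_ne_zero (s : {x : F // x ≠ 0}) : lead p n co s ≠ 0 := by
  have := (supp p n co (s : F)).min'_mem (supp_nonempty p n co s.property)
  simp only [supp, Finset.mem_filter] at this
  exact this.2

/-- The chosen family of `q-1` frequency vectors. -/
def bvec (s : {x : F // x ≠ 0}) : {x : F // x ≠ 0} → ℤ :=
  if (s : F) = bas p n co (piv p n co s) (lead p n co s) ∧ p < 2 * (lead p n co s).val then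
    delta F (bas p n co (piv p n co s) 1) +
      delta F (bas p n co (piv p n co s) ((p - (lead p n co s).val : ℕ) : ZMod p)) +
      delta F (bas p n co (piv p n co s) (((lead p n co s).val - 1 : ℕ) : ZMod p))
  else
    delta F (s : F) + delta F (-((s : F) - bas p n co (piv p n co s) (lead p n co s))) +
      delta F (-(bas p n co (piv p n co s) (lead p n co s)))


lemma supp_bas (j : Fin n) {a : ZMod p} (ha : a ≠ 0) : supp p n co (bas p n co j a) = {j} := by
  ext j'
  simp only [supp, Finset.mem_filter, Finset.mem_univ, true_and, co_bas, Finset.mem_singleton]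
  constructor
  · intro h
    by_contra hne
    exact h (Pi.single_eq_of_ne hne _)
  · rintro rfl
    simpa [Pi.single_eq_same] using ha

lemma supp_neg (s : F) : supp p n co (-s) = supp p n co s := by
  ext j'
  simp [supp]

lemma piv_eq_of_supp {s : {x : F // x ≠ 0}} {j : Fin n} (h : supp p n co (s : F) = {j}) :
    piv p n co s = j := by
  have h1 : piv p n co s ∈ supp p n co (s : F) := Finset.min'_mem _ _
  rw [h] at h1
  exact Finset.mem_singleton.mp h1

/-- The span of the chosen vectors. -/
def SpanB : Submodule ℤ ({x : F // x ≠ 0} → ℤ) := Submodule.span ℤ (Set.range (bvec p n co))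

lemma bvec_mem (s : {x : F // x ≠ 0}) : bvec p n co s ∈ SpanB p n co :=
  Submodule.subset_span ⟨s, rfl⟩

/-- The class of an indicator vector in the quotient by the span. -/
def Dq (x : F) : ({x : F // x ≠ 0} → ℤ) ⧸ SpanB p n co :=
  Submodule.Quotient.mk (delta F x)

lemma Dq_zero : Dq p n co (0 : F) = 0 := by
  rw [Dq, delta_zero]
  rfl

lemma relD {x y z : F} (h : delta F x + delta F y + delta F z ∈ SpanB p n co) :
    Dq p n co x + Dq p n co y + Dq p n co z = 0 := by
  rw [Dq, Dq, Dq, ← Submodule.Quotient.mk_add, ← Submodule.Quotient.mk_add]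
  exact (Submodule.Quotient.mk_eq_zero _).mpr h

lemma relD2 {x y : F} (h : delta F x + delta F y ∈ SpanB p n co) :
    Dq p n co x + Dq p n co y = 0 := by
  rw [Dq, Dq, ← Submodule.Quotient.mk_add]
  exact (Submodule.Quotient.mk_eq_zero _).mpr h

lemma pairS (j : Fin n) : ∀ a : ZMod p, a ≠ 0 →
    delta F (bas p n co j a) + delta F (bas p n co j (-a)) ∈ SpanB p n co := by
  have main : ∀ a : ZMod p, a ≠ 0 → ¬(p < 2 * a.val) →
      delta F (bas p n co j a) + delta F (bas p n co j (-a)) ∈ SpanB p n co := by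
    intro a ha hle
    have hs0 : bas p n co j a ≠ 0 := bas_ne_zero p n co j ha
    set st : {x : F // x ≠ 0} := ⟨bas p n co j a, hs0⟩ with hst
    have hcoe : (st : F) = bas p n co j a := rfl
    have hpiv : piv p n co st = j := piv_eq_of_supp p n co (by rw [hcoe]; exact supp_bas p n co j ha)
    have hlead : lead p n co st = a := by
      rw [lead, hpiv, hcoe, co_bas, Pi.single_eq_same]
    have hb := bvec_mem p n co st
    rw [bvec, hpiv, hlead, hcoe] at hb
    rw [if_neg (fun hcon => hle hcon.2)] at hb
    rw [sub_self, neg_zero, delta_zero, add_zero, bas_neg] at hb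
    exact hb
  intro a ha
  by_cases hcase : p < 2 * a.val
  · have hne : (-a) ≠ 0 := neg_ne_zero.mpr ha
    have hvn : (-a).val = p - a.val := by rw [ZMod.neg_val, if_neg ha]
    have hvlt : a.val < p := ZMod.val_lt a
    have h2 : ¬(p < 2 * (-a).val) := by omega
    have := main (-a) hne h2
    rw [neg_neg, add_comm] at this
    exact this
  · exact main a ha hcase

lemma tripleS (j : Fin n) (k : ℕ) (hk1 : 1 ≤ k) (hk2 : 2 * k < p) :
    delta F (bas p n co j 1) + delta F (bas p n co j ((k : ℕ) : ZMod p)) +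
      delta F (bas p n co j ((p - k - 1 : ℕ) : ZMod p)) ∈ SpanB p n co := by
  have hp := (Fact.out : p.Prime).two_le
  have hkp : k < p := by omega
  have hv : (((p - k : ℕ) : ZMod p)).val = p - k := ZMod.val_cast_of_lt (by omega)
  have hane : (((p - k : ℕ) : ZMod p)) ≠ 0 := by
    intro h0
    rw [h0, ZMod.val_zero] at hv
    omega
  have hs0 : bas p n co j ((p - k : ℕ) : ZMod p) ≠ 0 := bas_ne_zero p n co j hane
  set st : {x : F // x ≠ 0} := ⟨bas p n co j ((p - k : ℕ) : ZMod p), hs0⟩ with hst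
  have hcoe : (st : F) = bas p n co j ((p - k : ℕ) : ZMod p) := rfl
  have hpiv : piv p n co st = j :=
    piv_eq_of_supp p n co (by rw [hcoe]; exact supp_bas p n co j hane)
  have hlead : lead p n co st = ((p - k : ℕ) : ZMod p) := by
    rw [lead, hpiv, hcoe, co_bas, Pi.single_eq_same]
  have hb := bvec_mem p n co st
  rw [bvec, hpiv, hlead, hcoe, hv] at hb
  rw [if_pos ⟨rfl, by omega⟩] at hb
  have hpk : p - (p - k) = k := by omega
  rwa [hpk] at hb

lemma lemA1 (j : Fin n) : ∀ k : ℕ, 2 * k ≤ p + 1 →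
    Dq p n co (bas p n co j ((k : ℕ) : ZMod p)) = (k : ℤ) • Dq p n co (bas p n co j 1) := by
  intro k
  induction k using Nat.strong_induction_on with
  | _ k ih =>
    intro hk
    rcases Nat.lt_or_ge k 2 with hsmall | h2
    · interval_cases k
      · simp only [Nat.cast_zero, zero_smul, bas_zero, Dq_zero]
      · simp
    · have hp := (Fact.out : p.Prime).two_le
      have hkp : k < p := by omega
      have ht := tripleS p n co j (k - 1) (by omega) (by omega)
      have hr := relD p n co ht
      have hpk : p - (k - 1) - 1 = p - k := by omega
      rw [hpk] at hr
      have hvk : (((k : ℕ) : ZMod p)).val = k := ZMod.val_cast_of_lt hkp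
      have hne : ((k : ℕ) : ZMod p) ≠ 0 := by
        intro h0; rw [h0, ZMod.val_zero] at hvk; omega
      have hpair := relD2 p n co (pairS p n co j ((k : ℕ) : ZMod p) hne)
      have hcast : ((p - k : ℕ) : ZMod p) = -((k : ℕ) : ZMod p) := by
        rw [Nat.cast_sub (le_of_lt hkp), ZMod.natCast_self, zero_sub]
      rw [hcast] at hr
      have ihk := ih (k - 1) (by omega) (by omega)
      rw [ihk] at hr
      -- hr : E + (k-1)•E + Dq (bas j (-(k cast))) = 0
      -- hpair : Dq (bas j (k cast)) + Dq (bas j (-(k cast))) = 0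
      have : Dq p n co (bas p n co j ((k : ℕ) : ZMod p)) =
          Dq p n co (bas p n co j 1) + ((k - 1 : ℕ) : ℤ) • Dq p n co (bas p n co j 1) := by
        have h3 : Dq p n co (bas p n co j (-((k : ℕ) : ZMod p))) =
            -Dq p n co (bas p n co j ((k : ℕ) : ZMod p)) := by
          rw [eq_neg_iff_add_eq_zero, add_comm]
          exact hpair
        rw [h3] at hr
        exact (add_neg_eq_zero.mp hr).symm
      rw [this]
      have hcast2 : ((k - 1 : ℕ) : ℤ) = (k : ℤ) - 1 := by omega
      rw [hcast2]
      module

lemma lemA2 (j : Fin n) : (p : ℤ) • Dq p n co (bas p n co j 1) = 0 := by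
  have hp := (Fact.out : p.Prime).two_le
  set k0 := (p + 1) / 2 with hk0def
  have h1 : 2 * k0 ≤ p + 1 := by omega
  have h2 : 2 * (p - k0) ≤ p + 1 := by omega
  have hk0p : k0 < p := by omega
  have hk0 : 0 < k0 := by omega
  have e1 := lemA1 p n co j k0 h1
  have e2 := lemA1 p n co j (p - k0) h2
  have hvk : (((k0 : ℕ) : ZMod p)).val = k0 := ZMod.val_cast_of_lt hk0p
  have hne : ((k0 : ℕ) : ZMod p) ≠ 0 := by
    intro h0; rw [h0, ZMod.val_zero] at hvk; omega
  have hpair := relD2 p n co (pairS p n co j ((k0 : ℕ) : ZMod p) hne)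
  have hcast : -((k0 : ℕ) : ZMod p) = ((p - k0 : ℕ) : ZMod p) := by
    rw [Nat.cast_sub (le_of_lt hk0p), ZMod.natCast_self, zero_sub]
  rw [hcast, e1, e2] at hpair
  have hsum : ((k0 : ℤ)) + ((p - k0 : ℕ) : ℤ) = (p : ℤ) := by omega
  rw [← hsum, add_smul]
  exact hpair

lemma lemA3 (j : Fin n) (k : ℕ) (hk : k ≤ p) :
    Dq p n co (bas p n co j ((k : ℕ) : ZMod p)) = (k : ℤ) • Dq p n co (bas p n co j 1) := by
  by_cases h : 2 * k ≤ p + 1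
  · exact lemA1 p n co j k h
  · have hp := (Fact.out : p.Prime).two_le
    rcases eq_or_lt_of_le hk with heq | hkp
    · rw [heq, ZMod.natCast_self, bas_zero, Dq_zero, lemA2 p n co j]
    · have hvk : (((k : ℕ) : ZMod p)).val = k := ZMod.val_cast_of_lt hkp
      have hne : ((k : ℕ) : ZMod p) ≠ 0 := by
        intro h0; rw [h0, ZMod.val_zero] at hvk; omega
      have hpair := relD2 p n co (pairS p n co j ((k : ℕ) : ZMod p) hne)
      have hcast : -((k : ℕ) : ZMod p) = ((p - k : ℕ) : ZMod p) := by
        rw [Nat.cast_sub (le_of_lt hkp), ZMod.natCast_self, zero_sub]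
      rw [hcast, lemA1 p n co j (p - k) (by omega)] at hpair
      -- hpair : Dq (bas j k) + ((p-k:ℕ):ℤ) • E = 0
      have hA2 := lemA2 p n co j
      have hsub : ((p - k : ℕ) : ℤ) = (p : ℤ) - (k : ℤ) := by omega
      rw [hsub] at hpair
      rw [add_eq_zero_iff_eq_neg] at hpair
      rw [hpair, ← neg_smul, neg_sub, sub_smul, hA2, sub_zero]


lemma supp_zero : supp p n co (0 : F) = ∅ := by
  ext j; simp [supp]

lemma lemPhi : ∀ (m : ℕ) (s : F), (supp p n co s).card = m →
    Dq p n co s = ∑ j, ((co s j).val : ℤ) • Dq p n co (bas p n co j 1) := by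
  intro m
  induction m using Nat.strong_induction_on with
  | _ m ih =>
    intro s hcard
    rcases Nat.lt_or_ge m 2 with hm | hm
    · interval_cases m
      · -- zero support: s = 0
        have hz : ∀ j, co s j = 0 := by
          intro j
          by_contra hj
          have hmem : j ∈ supp p n co s := Finset.mem_filter.mpr ⟨Finset.mem_univ _, hj⟩
          rw [Finset.card_eq_zero] at hcard
          rw [hcard] at hmem
          exact absurd hmem (Finset.notMem_empty j)
        have hs : s = 0 := by
          apply co.injective
          rw [map_zero]
          funext j; exact hz j
        subst hs
        rw [Dq_zero]
        symm
        apply Finset.sum_eq_zero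
        intro j _
        rw [hz j, ZMod.val_zero, Int.natCast_zero, zero_smul]
      · -- single support: s = bas j (co s j)
        obtain ⟨j, hj⟩ := Finset.card_eq_one.mp hcard
        have hjmem : j ∈ supp p n co s := by rw [hj]; exact Finset.mem_singleton_self j
        have haj : co s j ≠ 0 := (Finset.mem_filter.mp hjmem).2
        have hco : co s = Pi.single j (co s j) := by
          funext j'
          by_cases hj' : j' = j
          · subst hj'; rw [Pi.single_eq_same]
          · rw [Pi.single_eq_of_ne hj' _]
            by_contra h0
            have hmem' : j' ∈ supp p n co s := Finset.mem_filter.mpr ⟨Finset.mem_univ _, h0⟩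
            rw [hj] at hmem'
            exact hj' (Finset.mem_singleton.mp hmem')
        have hsrep : s = bas p n co j (co s j) := by
          apply co.injective
          rw [co_bas]
          exact hco
        have hval : (((co s j).val : ℕ) : ZMod p) = co s j := by
          rw [ZMod.natCast_val, ZMod.cast_id]
        have hA3 := lemA3 p n co j ((co s j).val) (le_of_lt (ZMod.val_lt _))
        rw [hval] at hA3
        have hRHS : (∑ j', ((co s j').val : ℤ) • Dq p n co (bas p n co j' 1))
            = ((co s j).val : ℤ) • Dq p n co (bas p n co j 1) := by
          rw [Finset.sum_eq_single j]
          · intro j' _ hne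
            rw [show co s j' = 0 by rw [hco]; exact Pi.single_eq_of_ne hne _]
            rw [ZMod.val_zero, Int.natCast_zero, zero_smul]
          · intro hmem'; exact absurd (Finset.mem_univ j) hmem'
        rw [hRHS]
        conv_lhs => rw [hsrep]
        exact hA3
    · -- m ≥ 2
      have hs : s ≠ 0 := by
        intro h0
        subst h0
        rw [supp_zero, Finset.card_empty] at hcard
        omega
      set st : {x : F // x ≠ 0} := ⟨s, hs⟩ with hst
      have hcoe : (st : F) = s := rfl
      set j0 := piv p n co st with hj0
      set a := lead p n co st with ha
      have haj : a ≠ 0 := lead_ne_zero p n co st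
      have hj0mem : j0 ∈ supp p n co s :=
        Finset.min'_mem (supp p n co (st : F)) (supp_nonempty p n co st.property)
      have haco : a = co s j0 := rfl
      set t : F := s - bas p n co j0 a with ht
      have hcot : ∀ j', co t j' = if j' = j0 then 0 else co s j' := by
        intro j'
        rw [ht, map_sub, Pi.sub_apply, co_bas]
        by_cases hj' : j' = j0
        · subst hj'; rw [Pi.single_eq_same, if_pos rfl, ← haco, sub_self]
        · rw [Pi.single_eq_of_ne hj' _, if_neg hj', sub_zero]
      have hsuppt : supp p n co t = (supp p n co s).erase j0 := by
        ext j'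
        simp only [supp, Finset.mem_filter, Finset.mem_univ, true_and, Finset.mem_erase]
        rw [hcot j']
        by_cases hj' : j' = j0
        · simp [hj']
        · simp [hj']
      have hcardt : (supp p n co t).card = m - 1 := by
        rw [hsuppt, Finset.card_erase_of_mem hj0mem, hcard]
      have htne : t ≠ 0 := by
        intro h0
        rw [h0, supp_zero, Finset.card_empty] at hcardt
        omega
      have hb := bvec_mem p n co st
      rw [bvec, ← hj0, ← ha, hcoe] at hb
      rw [if_neg] at hb
      swap
      · rintro ⟨heq, -⟩
        exact htne (by rw [ht, heq, sub_self])
      rw [← ht] at hb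
      have hrel := relD p n co hb
      have iht := ih (m - 1) (by omega) (-t) (by rw [supp_neg, hcardt])
      have ihb := ih 1 (by omega) (-(bas p n co j0 a)) (by
        rw [supp_neg, supp_bas p n co j0 haj, Finset.card_singleton])
      rw [iht, ihb] at hrel
      have hsum3 : ∀ j', co s j' + co (-t) j' + co (-(bas p n co j0 a)) j' = 0 := by
        intro j'
        have hzero : s + -t + -(bas p n co j0 a) = 0 := by rw [ht]; ring
        calc co s j' + co (-t) j' + co (-(bas p n co j0 a)) j'
            = (co s + co (-t) + co (-(bas p n co j0 a))) j' := rfl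
          _ = (co (s + -t + -(bas p n co j0 a))) j' := by rw [map_add, map_add]
          _ = 0 := by rw [hzero, map_zero]; rfl
      have hkey : ∀ j', (((co s j').val : ℤ) + ((co (-t) j').val : ℤ) +
          ((co (-(bas p n co j0 a)) j').val : ℤ)) • Dq p n co (bas p n co j' 1) = 0 := by
        intro j'
        have h0 : (((co s j').val + (co (-t) j').val + (co (-(bas p n co j0 a)) j').val : ℕ)
            : ZMod p) = 0 := by
          push_cast [ZMod.natCast_val, ZMod.cast_id]
          exact hsum3 j'
        obtain ⟨c, hc⟩ := (ZMod.natCast_eq_zero_iff _ _).mp h0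
        have hcint : (((co s j').val : ℤ) + ((co (-t) j').val : ℤ) +
            ((co (-(bas p n co j0 a)) j').val : ℤ)) = (p : ℤ) * (c : ℤ) := by
          exact_mod_cast hc
        rw [hcint, mul_comm, mul_smul, lemA2 p n co j', smul_zero]
      have hsplit : ∑ j', ((((co s j').val : ℤ) + ((co (-t) j').val : ℤ) +
          ((co (-(bas p n co j0 a)) j').val : ℤ)) • Dq p n co (bas p n co j' 1)) = 0 :=
        Finset.sum_eq_zero fun j' _ => hkey j'
      simp only [add_smul, Finset.sum_add_distrib] at hsplit
      have hcomb := hrel.trans hsplit.symm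
      exact add_right_cancel (add_right_cancel hcomb)

lemma vec_decomp (v : {x : F // x ≠ 0} → ℤ) :
    v = ∑ s : {x : F // x ≠ 0}, v s • delta F (s : F) := by
  funext t
  symm
  calc (∑ s : {x : F // x ≠ 0}, v s • delta F (s : F)) t
      = ∑ s : {x : F // x ≠ 0}, v s * delta F (s : F) t := by
        rw [Finset.sum_apply]
        exact Finset.sum_congr rfl fun s _ => rfl
    _ = v t := by
        rw [Finset.sum_eq_single t]
        · rw [show delta F (t : F) t = 1 from if_pos rfl, mul_one]
        · intro s _ hne
          rw [show delta F (s : F) t = 0 from if_neg fun h => hne (Subtype.ext h), mul_zero]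
        · intro hmem; exact absurd (Finset.mem_univ t) hmem

lemma ker_le_span : LinearMap.ker (phi F) ≤ SpanB p n co := by
  intro v hv
  rw [LinearMap.mem_ker] at hv
  have hgoal : (SpanB p n co).mkQ v = 0 := by
    conv_lhs => rw [vec_decomp v]
    rw [map_sum]
    simp only [map_smul, Submodule.mkQ_apply]
    have hD : ∀ s : {x : F // x ≠ 0},
        (Submodule.Quotient.mk (delta F (s : F)) : _ ⧸ SpanB p n co)
          = ∑ j, ((co (s : F) j).val : ℤ) • Dq p n co (bas p n co j 1) :=
      fun s => lemPhi p n co _ (s : F) rfl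
    calc ∑ s : {x : F // x ≠ 0},
          v s • (Submodule.Quotient.mk (delta F (s : F)) : _ ⧸ SpanB p n co)
        = ∑ s : {x : F // x ≠ 0},
            v s • ∑ j, ((co (s : F) j).val : ℤ) • Dq p n co (bas p n co j 1) := by
          exact Finset.sum_congr rfl fun s _ => by rw [hD s]
      _ = ∑ s : {x : F // x ≠ 0},
            ∑ j, (v s * ((co (s : F) j).val : ℤ)) • Dq p n co (bas p n co j 1) := by
          refine Finset.sum_congr rfl fun s _ => ?_
          rw [Finset.smul_sum]
          exact Finset.sum_congr rfl fun j _ => by rw [smul_smul]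
      _ = ∑ j, ∑ s : {x : F // x ≠ 0},
            (v s * ((co (s : F) j).val : ℤ)) • Dq p n co (bas p n co j 1) := Finset.sum_comm
      _ = ∑ j, (∑ s : {x : F // x ≠ 0},
            v s * ((co (s : F) j).val : ℤ)) • Dq p n co (bas p n co j 1) := by
          exact Finset.sum_congr rfl fun j _ => (Finset.sum_smul).symm
      _ = 0 := by
          apply Finset.sum_eq_zero
          intro j _
          have hNdvd : (p : ℤ) ∣ ∑ s : {x : F // x ≠ 0}, v s * ((co (s : F) j).val : ℤ) := by
            rw [← ZMod.intCast_zmod_eq_zero_iff_dvd]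
            push_cast [ZMod.natCast_val, ZMod.cast_id]
            have hphiv : co (phi F v) j = 0 := by rw [hv, map_zero]; rfl
            have hphi2 : co (∑ s : {x : F // x ≠ 0}, v s • (s : F)) j = 0 := hphiv
            rw [map_sum, Finset.sum_apply] at hphi2
            calc ∑ s : {x : F // x ≠ 0}, (v s : ZMod p) * (co (s : F) j)
                = ∑ s : {x : F // x ≠ 0}, (co (v s • (s : F))) j := by
                  refine Finset.sum_congr rfl fun s _ => ?_
                  rw [map_zsmul, Pi.smul_apply, zsmul_eq_mul]
              _ = 0 := hphi2
          obtain ⟨c, hc⟩ := hNdvd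
          rw [hc, mul_comm, mul_smul, lemA2 p n co j, smul_zero]
  rwa [Submodule.mkQ_apply, Submodule.Quotient.mk_eq_zero] at hgoal

lemma bvec_triple (s : {x : F // x ≠ 0}) :
    ∃ x y z : F, x + y + z = 0 ∧ bvec p n co s = delta F x + delta F y + delta F z := by
  unfold bvec
  split_ifs with h
  · refine ⟨_, _, _, ?_, rfl⟩
    have ha := lead_ne_zero p n co s
    have hval : 0 < (lead p n co s).val := by
      rcases Nat.eq_zero_or_pos (lead p n co s).val with h' | h'
      · exact absurd ((ZMod.val_eq_zero _).mp h') ha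
      · exact h'
    have hlt : (lead p n co s).val < p := ZMod.val_lt _
    rw [bas_add, bas_add]
    have h2 : (1 + ((p - (lead p n co s).val) + ((lead p n co s).val - 1)) : ℕ) = p := by omega
    have h3 : (1 : ZMod p) + (((p - (lead p n co s).val : ℕ) : ZMod p) +
        (((lead p n co s).val - 1 : ℕ) : ZMod p)) = 0 := by
      rw [show (1 : ZMod p) = ((1 : ℕ) : ZMod p) by norm_num, ← Nat.cast_add, ← Nat.cast_add, h2,
        ZMod.natCast_self]
    rw [add_assoc, h3, bas_zero]
  · exact ⟨_, _, _, by ring, rfl⟩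

lemma span_le_ker : SpanB p n co ≤ LinearMap.ker (phi F) := by
  rw [SpanB, Submodule.span_le]
  rintro w ⟨s, rfl⟩
  obtain ⟨x, y, z, hxyz, heq⟩ := bvec_triple p n co s
  simp only [SetLike.mem_coe, LinearMap.mem_ker]
  rw [heq, map_add, map_add, phi_delta, phi_delta, phi_delta, hxyz]

lemma span_eq_ker : SpanB p n co = LinearMap.ker (phi F) :=
  le_antisymm (span_le_ker p n co) (ker_le_span p n co)

include co in
lemma char_smul (x : F) : (p : ℤ) • x = 0 := by
  apply co.injective
  rw [map_zsmul, map_zero]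
  funext j
  rw [Pi.smul_apply, zsmul_eq_mul]
  rw [show ((p : ℤ) : ZMod p) = 0 by rw [Int.cast_natCast, ZMod.natCast_self], zero_mul]
  rfl

lemma phi_single (t : {x : F // x ≠ 0}) :
    phi F (Pi.single t (1 : ℤ) : {x : F // x ≠ 0} → ℤ) = (t : F) := by
  show (∑ s : {x : F // x ≠ 0}, (Pi.single t (1 : ℤ) : {x : F // x ≠ 0} → ℤ) s • (s : F)) = (t : F)
  rw [Finset.sum_eq_single t]
  · rw [Pi.single_eq_same, one_smul]
  · intro s _ hne
    rw [Pi.single_eq_of_ne hne, zero_smul]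
  · intro hmem
    exact absurd (Finset.mem_univ t) hmem

/-- The rational cast map on vectors. -/
def cQ : ({x : F // x ≠ 0} → ℤ) →ₗ[ℤ] ({x : F // x ≠ 0} → ℚ) where
  toFun v := fun s => ((v s : ℤ) : ℚ)
  map_add' v w := by
    funext s
    simp only [Pi.add_apply]
    push_cast
    ring
  map_smul' c v := by
    funext s
    simp only [Pi.smul_apply, smul_eq_mul, RingHom.id_apply, zsmul_eq_mul]
    push_cast
    ring

lemma bvec_linearIndependent : LinearIndependent ℤ (bvec p n co) := by
  classical
  set bQ : {x : F // x ≠ 0} → ({x : F // x ≠ 0} → ℚ) :=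
    fun i => cQ (bvec p n co i) with hbQ
  have hQ : LinearIndependent ℚ bQ := by
    apply linearIndependent_of_top_le_span_of_card_eq_finrank
    · have hsingle : ∀ t : {x : F // x ≠ 0},
          (Pi.single t (1 : ℚ) : {x : F // x ≠ 0} → ℚ) ∈
            Submodule.span ℚ (Set.range bQ) := by
        intro t
        have hmem : ((p : ℤ) • (Pi.single t (1 : ℤ) : {x : F // x ≠ 0} → ℤ)) ∈ SpanB p n co := by
          rw [span_eq_ker p n co, LinearMap.mem_ker, map_smul, phi_single,
            char_smul p n co _]
        have himg : cQ ((p : ℤ) • (Pi.single t (1 : ℤ) : {x : F // x ≠ 0} → ℤ)) ∈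
            Submodule.span ℚ (Set.range bQ) := by
          have h1 : cQ ((p : ℤ) • (Pi.single t (1 : ℤ) : {x : F // x ≠ 0} → ℤ)) ∈
              Submodule.map (cQ (F := F)) (SpanB p n co) := ⟨_, hmem, rfl⟩
          rw [SpanB, Submodule.map_span] at h1
          have h2 : Submodule.span ℤ (cQ '' Set.range (bvec p n co)) ≤
              Submodule.restrictScalars ℤ (Submodule.span ℚ (Set.range bQ)) := by
            rw [Submodule.span_le]
            rintro w ⟨u, ⟨i, rfl⟩, rfl⟩
            exact Submodule.subset_span ⟨i, rfl⟩
          exact h2 h1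
        have hcast : cQ ((p : ℤ) • (Pi.single t (1 : ℤ) : {x : F // x ≠ 0} → ℤ)) =
            (p : ℚ) • (Pi.single t (1 : ℚ) : {x : F // x ≠ 0} → ℚ) := by
          funext u
          show ((((p : ℤ) • (Pi.single t (1 : ℤ) : {x : F // x ≠ 0} → ℤ)) u : ℤ) : ℚ) = _
          rw [Pi.smul_apply, Pi.smul_apply, zsmul_eq_mul, smul_eq_mul]
          push_cast
          congr 1
          by_cases hu : u = t
          · subst hu; rw [Pi.single_eq_same, Pi.single_eq_same]; norm_num
          · rw [Pi.single_eq_of_ne hu, Pi.single_eq_of_ne hu]; norm_num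
        rw [hcast] at himg
        have hp0 : (p : ℚ) ≠ 0 := Nat.cast_ne_zero.mpr (Fact.out : p.Prime).ne_zero
        have hf := Submodule.smul_mem _ ((p : ℚ)⁻¹) himg
        rwa [smul_smul, inv_mul_cancel₀ hp0, one_smul] at hf
      intro x _
      have hx : x = ∑ t : {x : F // x ≠ 0},
          x t • (Pi.single t (1 : ℚ) : {x : F // x ≠ 0} → ℚ) := by
        funext u
        rw [Finset.sum_apply, Finset.sum_eq_single u]
        · rw [Pi.smul_apply, Pi.single_eq_same, smul_eq_mul, mul_one]
        · intro t _ hne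
          rw [Pi.smul_apply, Pi.single_eq_of_ne (Ne.symm hne), smul_zero]
        · intro hmem
          exact absurd (Finset.mem_univ u) hmem
      rw [hx]
      exact Submodule.sum_mem _ fun t _ => Submodule.smul_mem _ _ (hsingle t)
    · rw [Module.finrank_pi]
  rw [Fintype.linearIndependent_iff] at hQ ⊢
  intro g hg i
  have hg2 : ∑ i, (g i : ℚ) • bQ i = 0 := by
    have h3 := congrArg (cQ (F := F)) hg
    rw [map_sum, map_zero] at h3
    calc ∑ i, (g i : ℚ) • bQ i = ∑ i, cQ (g i • bvec p n co i) := by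
          refine Finset.sum_congr rfl fun i _ => ?_
          rw [map_smul, hbQ, Int.cast_smul_eq_zsmul]
      _ = 0 := h3
  exact_mod_cast hQ (fun i => (g i : ℚ)) hg2 i

lemma quot_card :
    Nat.card (({x : F // x ≠ 0} → ℤ) ⧸ SpanB p n co) = Fintype.card F := by
  rw [span_eq_ker p n co]
  have hr : LinearMap.range (phi F) = ⊤ :=
    LinearMap.range_eq_top.mpr (phi_surjective (F := F))
  rw [Nat.card_congr (phi F).quotKerEquivRange.toEquiv,
    Nat.card_congr (LinearEquiv.ofTop _ hr).toEquiv]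
  exact Nat.card_eq_fintype_card

lemma det_natAbs_eq :
    (Matrix.of fun s i => bvec p n co i s).det.natAbs = Fintype.card F := by
  classical
  set M : Matrix {x : F // x ≠ 0} {x : F // x ≠ 0} ℤ :=
    Matrix.of fun s i => bvec p n co i s with hM
  set T := Matrix.toLin' M with hT
  have hTx : ∀ x, T x = ∑ i, x i • bvec p n co i := by
    intro x
    funext s
    rw [hT, Matrix.toLin'_apply]
    show ∑ i, M s i * x i = _
    rw [Finset.sum_apply]
    refine Finset.sum_congr rfl fun i _ => ?_
    rw [Pi.smul_apply, smul_eq_mul, mul_comm]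
    rfl
  have hrange : LinearMap.range T = SpanB p n co := by
    apply le_antisymm
    · rintro w ⟨x, rfl⟩
      rw [hTx]
      exact Submodule.sum_mem _ fun i _ => Submodule.smul_mem _ _ (bvec_mem p n co i)
    · rw [SpanB, Submodule.span_le]
      rintro w ⟨i, rfl⟩
      refine ⟨Pi.single i 1, ?_⟩
      rw [hTx]
      rw [Finset.sum_eq_single i]
      · rw [Pi.single_eq_same, one_smul]
      · intro i' _ hne
        rw [Pi.single_eq_of_ne hne, zero_smul]
      · intro hmem
        exact absurd (Finset.mem_univ i) hmem
  have hinj : Function.Injective T := by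
    have hli := bvec_linearIndependent p n co
    rw [Fintype.linearIndependent_iff] at hli
    intro x y hxy
    have h0 : T (x - y) = 0 := by rw [map_sub, hxy, sub_self]
    have hz := hli (x - y) ((hTx (x - y)).symm.trans h0)
    funext i
    have := hz i
    rw [Pi.sub_apply] at this
    omega
  have hcard : Nat.card (({x : F // x ≠ 0} → ℤ) ⧸ LinearMap.range T) = Fintype.card F := by
    rw [hrange]
    exact quot_card p n co
  have hfin : Nat.card (({x : F // x ≠ 0} → ℤ) ⧸ LinearMap.range T) ≠ 0 := by
    rw [hcard]
    exact Fintype.card_ne_zero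
  have hdet := natAbs_det_eq_card (LinearMap.range T) (LinearEquiv.ofInjective T hinj) hfin
  have hcomp : (LinearMap.range T).subtype ∘ₗ
      ((LinearEquiv.ofInjective T hinj) : _ →ₗ[ℤ] LinearMap.range T) = T :=
    LinearMap.ext fun x => rfl
  rw [hcomp, hcard, hT, LinearMap.det_toLin'] at hdet
  exact hdet

end Core

end Stmt10Aux

open FreqModule

/-- **Lemma 3.1.** For any prime power `q` and any `χ ∈ 𝔽_q*`, the
ℤ-module `𝔐_q(χ,χ,χ)` possesses a ℤ-basis `𝔟₁,…,𝔟_{q−1}` of non-negative integer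
vectors such that `‖𝔟_i‖₁ ≤ 3` and `Σ_{s∈𝔽_q*} 𝔟_{i,s}·s = 0` in `𝔽_q` for every
`i`, and the `(q−1)×(q−1)` matrix with columns `𝔟₁,…,𝔟_{q−1}` has determinant of
absolute value `q`.  Furthermore, for every `k₀ > 3`, `𝔐_q(χ,…,χ)` (with `k₀`
coefficients) equals `𝔐_q(χ,χ,χ)`. -/
theorem stmt10 (F : Type) [Field F] [Fintype F] [DecidableEq F]
    (χ : {x : F // x ≠ 0}) :
    (∃ b : {x : F // x ≠ 0} → ({x : F // x ≠ 0} → ℤ),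
      (∀ i s, 0 ≤ b i s) ∧
      (∀ i, ∑ s, (b i s).natAbs ≤ 3) ∧
      (∀ i, ∑ s : {x : F // x ≠ 0}, (b i s) • (s : F) = 0) ∧
      LinearIndependent ℤ b ∧
      Submodule.span ℤ (Set.range b) = freqModule F 3 (fun _ => χ) ∧
      (Matrix.of fun s i => b i s).det.natAbs = Fintype.card F) ∧
    (∀ k₀ : ℕ, 3 < k₀ →
      freqModule F k₀ (fun _ => χ) = freqModule F 3 (fun _ => χ)) := by
  classical
  open Stmt10Aux in
  set p := ringChar F with hp
  haveI hchar : CharP F p := ringChar.charP F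
  haveI hprime : Fact p.Prime := ⟨CharP.char_is_prime F p⟩
  letI : Algebra (ZMod p) F := ZMod.algebra F p
  haveI : Module.Finite (ZMod p) F := Module.Finite.of_finite
  set n := Module.finrank (ZMod p) F with hn
  set e : Module.Basis (Fin n) (ZMod p) F := Module.finBasis (ZMod p) F with he
  set co : F ≃+ (Fin n → ZMod p) := e.equivFun.toAddEquiv with hco
  have hspan := span_eq_ker p n co
  have hfreqk : ∀ k, 3 ≤ k → freqModule F k (fun _ => χ) = LinearMap.ker (phi F) := by
    intro k hk
    apply le_antisymm (freqModule_le_ker χ k)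
    calc LinearMap.ker (phi F) = SpanB p n co := hspan.symm
      _ ≤ freqModule F k (fun _ => χ) := by
        rw [SpanB, Submodule.span_le]
        rintro w ⟨s, rfl⟩
        obtain ⟨x, y, z, hxyz, heq⟩ := bvec_triple p n co s
        rw [heq]
        exact triple_mem_freqModule χ k hk x y z hxyz
  constructor
  · refine ⟨bvec p n co, ?_, ?_, ?_, ?_, ?_, ?_⟩
    · intro i s
      obtain ⟨x, y, z, _, heq⟩ := bvec_triple p n co i
      rw [heq]
      exact add_nonneg (add_nonneg (delta_nonneg _ _) (delta_nonneg _ _)) (delta_nonneg _ _)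
    · intro i
      obtain ⟨x, y, z, _, heq⟩ := bvec_triple p n co i
      rw [heq]
      exact sum_delta_natAbs_le x y z
    · intro i
      have hmem := span_le_ker p n co (bvec_mem p n co i)
      rw [LinearMap.mem_ker] at hmem
      exact hmem
    · exact bvec_linearIndependent p n co
    · rw [hfreqk 3 le_rfl]
      exact hspan
    · exact det_natAbs_eq p n co
  · intro k₀ hk₀
    rw [hfreqk k₀ (by omega), hfreqk 3 le_rfl]
end

section
/- For every odd prime p, det(A_p) = p. -/
/-- The matrix `A_p` from the paper, for an odd prime `p`.  Rows and columns are
indexed by `{1, …, p−1}` (here realised as `Fin (p-1)`, with `i : Fin (p-1)`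
corresponding to the value `i+1`).  The `j`-th column equals `e_j + e_{p−j}` for
`1 ≤ j ≤ (p−1)/2`, and `e_j + e_{p−1} + e_{p−j+1}` for `(p+1)/2 ≤ j ≤ p−1`;
coinciding indices are added. -/
def Apmatrix (p : ℕ) : Matrix (Fin (p - 1)) (Fin (p - 1)) ℤ :=
  Matrix.of fun i j =>
    (if (i : ℕ) + 1 = (j : ℕ) + 1 then 1 else 0) +
      (if (j : ℕ) + 1 ≤ (p - 1) / 2 then
        (if (i : ℕ) + 1 = p - ((j : ℕ) + 1) then 1 else 0)
      else
        (if (i : ℕ) + 1 = p - 1 then 1 else 0) +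
          (if (i : ℕ) + 1 = p - ((j : ℕ) + 1) + 1 then 1 else 0))

/-- The lower-triangular factor in the `LU`-decomposition of `A_p` over `ℚ`. -/
def Lmat (p : ℕ) : Matrix (Fin (p - 1)) (Fin (p - 1)) ℚ :=
  Matrix.of fun i j =>
    if (i : ℕ) = (j : ℕ) then 1
    else if (p - 1) / 2 ≤ (i : ℕ) ∧ (i : ℕ) + 3 ≤ p ∧ (i : ℕ) + (j : ℕ) + 2 = p then 1
    else if (i : ℕ) + 2 = p ∧ (j : ℕ) = 0 then 1
    else if (i : ℕ) + 2 = p ∧ (p - 1) / 2 ≤ (j : ℕ) ∧ (j : ℕ) + 3 ≤ p then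
      (2 * ((j : ℕ) : ℚ) + 2 - (p : ℚ)) / 2
    else 0

/-- The upper-triangular factor in the `LU`-decomposition of `A_p` over `ℚ`. -/
def Umat (p : ℕ) : Matrix (Fin (p - 1)) (Fin (p - 1)) ℚ :=
  Matrix.of fun i j =>
    if (i : ℕ) = (j : ℕ) then
      (if (i : ℕ) = (p - 1) / 2 then 2
       else if (i : ℕ) + 2 = p then (p : ℚ) / 2 else 1)
    else if 1 ≤ (i : ℕ) ∧ (i : ℕ) + 1 ≤ (p - 1) / 2 ∧ (i : ℕ) + (j : ℕ) + 1 = p then 1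
    else if (p - 1) / 2 ≤ (i : ℕ) ∧ (i : ℕ) + 3 ≤ p ∧ (j : ℕ) = (i : ℕ) + 1 then -1
    else 0

lemma sum_delta {n : ℕ} (t : ℕ) (ht : t < n) (f : Fin n → ℚ) :
    (∑ k : Fin n, if (k : ℕ) = t then f k else 0) = f ⟨t, ht⟩ := by
  rw [Finset.sum_eq_single (⟨t, ht⟩ : Fin n)]
  · simp
  · intro k _ hk
    exact if_neg fun h => hk (Fin.ext h)
  · intro h; exact absurd (Finset.mem_univ _) h

lemma sum_delta2 {n : ℕ} (t₁ t₂ : ℕ) (h₁ : t₁ < n) (h₂ : t₂ < n) (f g : Fin n → ℚ) :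
    (∑ k : Fin n, ((if (k : ℕ) = t₁ then f k else 0) + (if (k : ℕ) = t₂ then g k else 0)))
      = f ⟨t₁, h₁⟩ + g ⟨t₂, h₂⟩ := by
  rw [Finset.sum_add_distrib, sum_delta t₁ h₁, sum_delta t₂ h₂]

lemma Lmat_det (p : ℕ) (t0 : ℕ) (ht0 : p = 2 * t0 + 1) (h5 : 5 ≤ p) :
    (Lmat p).det = 1 := by
  rw [Matrix.det_of_lowerTriangular (Lmat p) ?_]
  · apply Finset.prod_eq_one
    intro i _
    simp [Lmat]
  · intro i j hij
    have h' : (i : ℕ) < (j : ℕ) := hij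
    simp only [Lmat, Matrix.of_apply]
    split_ifs <;> first | rfl | (exfalso; omega)

lemma Umat_det (p : ℕ) (t0 : ℕ) (ht0 : p = 2 * t0 + 1) (h5 : 5 ≤ p) :
    (Umat p).det = p := by
  rw [Matrix.det_of_upperTriangular ?_]
  · have hm : (p - 1) / 2 < p - 1 := by omega
    have hn : p - 2 < p - 1 := by omega
    have hrw : ∀ i : Fin (p - 1), (Umat p) i i =
        (if (i : ℕ) = (p - 1) / 2 then 2 else 1) * (if (i : ℕ) = p - 2 then (p : ℚ) / 2 else 1) := by
      intro i
      simp only [Umat, Matrix.of_apply]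
      simp only [if_true]
      split_ifs <;> first | (exfalso; omega) | norm_num
    rw [Finset.prod_congr rfl fun i _ => hrw i, Finset.prod_mul_distrib]
    rw [Finset.prod_eq_single (⟨(p - 1) / 2, hm⟩ : Fin (p - 1)) ?_ ?_,
        Finset.prod_eq_single (⟨p - 2, hn⟩ : Fin (p - 1)) ?_ ?_]
    · rw [if_pos rfl, if_pos rfl]; ring
    · intro b _ hb
      exact if_neg fun h => hb (Fin.ext h)
    · intro h; exact absurd (Finset.mem_univ _) h
    · intro b _ hb
      exact if_neg fun h => hb (Fin.ext h)
    · intro h; exact absurd (Finset.mem_univ _) h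
  · intro i j hij
    have h' : (j : ℕ) < (i : ℕ) := hij
    simp only [Umat, Matrix.of_apply]
    split_ifs <;> first | rfl | (exfalso; omega)

set_option maxHeartbeats 2000000 in
lemma Ap_factor (p : ℕ) (t0 : ℕ) (ht0 : p = 2 * t0 + 1) (h5 : 5 ≤ p) :
    Lmat p * Umat p = (Apmatrix p).map (Int.cast : ℤ → ℚ) := by
  ext i j
  have hiv := i.isLt
  have hjv := j.isLt
  rw [Matrix.mul_apply]
  rcases lt_or_ge (i : ℕ) ((p - 1) / 2) with hi | hi
  · -- rows 1 .. (p-1)/2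
    have hrow : ∀ k : Fin (p - 1),
        Lmat p i k * Umat p k j = (if (k : ℕ) = (i : ℕ) then Umat p k j else 0) := by
      intro k
      have hkv := k.isLt
      simp only [Lmat, Matrix.of_apply]
      split_ifs <;> first | ring1 | (exfalso; omega)
    rw [Finset.sum_congr rfl fun k _ => hrow k, sum_delta (i : ℕ) i.isLt]
    show Umat p ⟨(i : ℕ), i.isLt⟩ j = _
    simp only [Umat, Apmatrix, Matrix.of_apply, Matrix.map_apply]
    push_cast
    split_ifs <;> first | (exfalso; omega) | norm_num
  · rcases lt_or_ge (i : ℕ) (p - 2) with hi2 | hi2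
    · -- rows (p+1)/2 .. p-2
      have hi3 : (i : ℕ) + 3 ≤ p := by omega
      have htlt : p - (i : ℕ) - 2 < p - 1 := by omega
      have hrow : ∀ k : Fin (p - 1),
          Lmat p i k * Umat p k j =
            (if (k : ℕ) = (i : ℕ) then Umat p k j else 0) +
            (if (k : ℕ) = p - (i : ℕ) - 2 then Umat p k j else 0) := by
        intro k
        have hkv := k.isLt
        simp only [Lmat, Matrix.of_apply]
        split_ifs <;> first | ring1 | (exfalso; omega)
      rw [Finset.sum_congr rfl fun k _ => hrow k,
          sum_delta2 (i : ℕ) (p - (i : ℕ) - 2) i.isLt htlt]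
      show Umat p ⟨(i : ℕ), i.isLt⟩ j + Umat p ⟨p - (i : ℕ) - 2, htlt⟩ j = _
      simp only [Umat, Apmatrix, Matrix.of_apply, Matrix.map_apply]
      push_cast
      split_ifs <;> first | (exfalso; omega) | norm_num
    · -- last row
      have hi3 : (i : ℕ) + 2 = p := by omega
      rcases Nat.eq_zero_or_pos (j : ℕ) with hj0 | hj1
      · -- column 1
        have hrow : ∀ k : Fin (p - 1),
            Lmat p i k * Umat p k j =
              (if (k : ℕ) = 0 then Lmat p i k * Umat p k j else 0) := by
          intro k
          have hkv := k.isLt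
          by_cases hk0 : (k : ℕ) = 0
          · rw [if_pos hk0]
          · rw [if_neg hk0]
            have hU : Umat p k j = 0 := by
              simp only [Umat, Matrix.of_apply]
              split_ifs <;> first | rfl | (exfalso; omega)
            rw [hU, mul_zero]
        rw [Finset.sum_congr rfl fun k _ => hrow k, sum_delta 0 (by omega)]
        show Lmat p i ⟨0, _⟩ * Umat p ⟨0, _⟩ j = _
        simp only [Lmat, Umat, Apmatrix, Matrix.of_apply, Matrix.map_apply, Fin.val_mk,
          if_true, and_true, true_and]
        push_cast
        split_ifs <;> first | (exfalso; omega) | norm_num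
      · -- columns ≥ 2
        obtain ⟨jv, hjvv⟩ : ∃ jv, (j : ℕ) = jv + 1 := ⟨(j : ℕ) - 1, by omega⟩
        have hjvlt : jv < p - 1 := by omega
        have hrow : ∀ k : Fin (p - 1),
            Lmat p i k * Umat p k j =
              (if (k : ℕ) = (j : ℕ) then Lmat p i k * Umat p k j else 0) +
              (if (k : ℕ) = jv then Lmat p i k * Umat p k j else 0) := by
          intro k
          have hkv := k.isLt
          by_cases h1 : (k : ℕ) = (j : ℕ)
          · rw [if_pos h1, if_neg (by omega), add_zero]
          · by_cases h2 : (k : ℕ) = jv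
            · rw [if_neg h1, if_pos h2, zero_add]
            · rw [if_neg h1, if_neg h2, add_zero]
              simp only [Lmat, Umat, Matrix.of_apply]
              split_ifs <;> first | ring1 | (exfalso; omega)
        rw [Finset.sum_congr rfl fun k _ => hrow k, sum_delta2 (j : ℕ) jv j.isLt hjvlt]
        show Lmat p i ⟨(j : ℕ), _⟩ * Umat p ⟨(j : ℕ), _⟩ j
            + Lmat p i ⟨jv, _⟩ * Umat p ⟨jv, _⟩ j = _
        have hq : ((j : ℕ) : ℚ) = (jv : ℚ) + 1 := by exact_mod_cast hjvv
        rcases lt_or_ge (j : ℕ) ((p - 1) / 2) with hc | hc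
        · -- (b) 1 ≤ j < m : everything vanishes
          have hL1 : Lmat p i ⟨(j : ℕ), j.isLt⟩ = 0 := by
            simp only [Lmat, Matrix.of_apply, Fin.val_mk, if_true, and_true, true_and]
            rw [if_neg (by omega), if_neg (by omega), if_neg (by omega), if_neg (by omega)]
          have hU2 : Umat p ⟨jv, hjvlt⟩ j = 0 := by
            simp only [Umat, Matrix.of_apply, Fin.val_mk, if_true, and_true, true_and]
            rw [if_neg (by omega), if_neg (by omega), if_neg (by omega)]
          have hA : Apmatrix p i j = 0 := by
            simp only [Apmatrix, Matrix.of_apply]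
            split_ifs <;> omega
          rw [Matrix.map_apply, hA, hL1, hU2, zero_mul, mul_zero, add_zero]
          norm_num
        · rcases eq_or_lt_of_le hc with hc2 | hc2
          · -- (c) j = m
            have hq2 : 2 * ((j : ℕ) : ℚ) + 2 = (p : ℚ) + 1 := by
              have : 2 * (j : ℕ) + 2 = p + 1 := by omega
              exact_mod_cast this
            have hL1 : Lmat p i ⟨(j : ℕ), j.isLt⟩ = (2 * ((j : ℕ) : ℚ) + 2 - (p : ℚ)) / 2 := by
              simp only [Lmat, Matrix.of_apply, Fin.val_mk, if_true, and_true, true_and]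
              rw [if_neg (by omega), if_neg (by omega), if_neg (by omega), if_pos (by omega)]
            have hU1 : Umat p ⟨(j : ℕ), j.isLt⟩ j = 2 := by
              simp only [Umat, Matrix.of_apply, Fin.val_mk, if_true, and_true, true_and]
              rw [if_pos (by omega)]
            have hL2 : Lmat p i ⟨jv, hjvlt⟩ = 0 := by
              simp only [Lmat, Matrix.of_apply, Fin.val_mk, if_true, and_true, true_and]
              rw [if_neg (by omega), if_neg (by omega), if_neg (by omega), if_neg (by omega)]
            have hA : Apmatrix p i j = 1 := by
              simp only [Apmatrix, Matrix.of_apply]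
              split_ifs <;> omega
            rw [Matrix.map_apply, hA, hL1, hU1, hL2, zero_mul, add_zero]
            push_cast
            linear_combination hq2
          · rcases lt_or_ge (j : ℕ) (p - 2) with hd | he
            · -- (d) m+1 ≤ j ≤ p-3
              have hL1 : Lmat p i ⟨(j : ℕ), j.isLt⟩ = (2 * ((j : ℕ) : ℚ) + 2 - (p : ℚ)) / 2 := by
                simp only [Lmat, Matrix.of_apply, Fin.val_mk, if_true, and_true, true_and]
                rw [if_neg (by omega), if_neg (by omega), if_neg (by omega), if_pos (by omega)]
              have hU1 : Umat p ⟨(j : ℕ), j.isLt⟩ j = 1 := by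
                simp only [Umat, Matrix.of_apply, Fin.val_mk, if_true, and_true, true_and]
                rw [if_neg (by omega), if_neg (by omega)]
              have hL2 : Lmat p i ⟨jv, hjvlt⟩ = (2 * (jv : ℚ) + 2 - (p : ℚ)) / 2 := by
                simp only [Lmat, Matrix.of_apply, Fin.val_mk, if_true, and_true, true_and]
                rw [if_neg (by omega), if_neg (by omega), if_neg (by omega), if_pos (by omega)]
              have hU2 : Umat p ⟨jv, hjvlt⟩ j = -1 := by
                simp only [Umat, Matrix.of_apply, Fin.val_mk, if_true, and_true, true_and]
                rw [if_neg (by omega), if_neg (by omega), if_pos (by omega)]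
              have hA : Apmatrix p i j = 1 := by
                simp only [Apmatrix, Matrix.of_apply]
                split_ifs <;> omega
              rw [Matrix.map_apply, hA, hL1, hU1, hL2, hU2]
              push_cast
              linear_combination hq
            · -- (e) j = p-2
              have hq3 : (jv : ℚ) + 3 = (p : ℚ) := by
                have : jv + 3 = p := by omega
                exact_mod_cast this
              have hL1 : Lmat p i ⟨(j : ℕ), j.isLt⟩ = 1 := by
                simp only [Lmat, Matrix.of_apply, Fin.val_mk, if_true, and_true, true_and]
                rw [if_pos (by omega)]
              have hU1 : Umat p ⟨(j : ℕ), j.isLt⟩ j = (p : ℚ) / 2 := by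
                simp only [Umat, Matrix.of_apply, Fin.val_mk, if_true, and_true, true_and]
                rw [if_neg (by omega), if_pos (by omega)]
              have hL2 : Lmat p i ⟨jv, hjvlt⟩ = (2 * (jv : ℚ) + 2 - (p : ℚ)) / 2 := by
                simp only [Lmat, Matrix.of_apply, Fin.val_mk, if_true, and_true, true_and]
                rw [if_neg (by omega), if_neg (by omega), if_neg (by omega), if_pos (by omega)]
              have hU2 : Umat p ⟨jv, hjvlt⟩ j = -1 := by
                simp only [Umat, Matrix.of_apply, Fin.val_mk, if_true, and_true, true_and]
                rw [if_neg (by omega), if_neg (by omega), if_pos (by omega)]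
              have hA : Apmatrix p i j = 2 := by
                simp only [Apmatrix, Matrix.of_apply]
                split_ifs <;> omega
              rw [Matrix.map_apply, hA, hL1, hU1, hL2, hU2]
              push_cast
              linear_combination -hq3

/-- For every odd prime `p`, `det (A_p) = p`. -/
theorem stmt12 (p : ℕ) (hp : p.Prime) (hodd : Odd p) :
    (Apmatrix p).det = (p : ℤ) := by
  obtain ⟨t0, ht0⟩ := hodd
  rcases eq_or_ne p 3 with h3 | h3
  · subst h3
    have h2 : (Apmatrix 3).det =
        (Apmatrix 3) 0 0 * (Apmatrix 3) 1 1 - (Apmatrix 3) 0 1 * (Apmatrix 3) 1 0 :=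
      Matrix.det_fin_two _
    rw [h2]
    norm_num [Apmatrix]
  · have h5 : 5 ≤ p := by
      have := hp.two_le
      omega
    have hfact := Ap_factor p t0 ht0 h5
    have hmap : ((Apmatrix p).map (Int.cast : ℤ → ℚ)).det = ((Apmatrix p).det : ℚ) := by
      have := RingHom.map_det (Int.castRingHom ℚ) (Apmatrix p)
      rw [RingHom.mapMatrix_apply] at this
      exact this.symm
    have : ((Apmatrix p).det : ℚ) = (p : ℚ) := by
      rw [← hmap, ← hfact, Matrix.det_mul, Lmat_det p t0 ht0 h5, Umat_det p t0 ht0 h5, one_mul]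
    exact_mod_cast this
end

section
/- The q−1 vectors (b_h)_{h∈𝔽_q*} are ℤ-linearly independent, the ℤ-submodule of ℤ^{𝔽_q*} they span contains 𝔐, and the (q−1)×(q−1) matrix whose columns are the vectors (b_h)_{h∈𝔽_q*} has determinant of absolute value q = p^ℓ. -/
open FreqModule

/-- Let `p` be a prime, `ℓ ≥ 1`, `q = p^ℓ`, and let `F` be the
field with `q` elements, with a fixed `𝔽_p`-basis `v₀,…,v_{ℓ−1}`.  For `h ∈ 𝔽_q*`
write `h = Σ_i a_i(h)·v_i` with `a_i(h) ∈ {0,…,p−1}` and set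
`b_h = e_h + Σ_i a_i(h)·e_{−v_i} ∈ ℤ^{𝔽_q*}` (coinciding coordinates added).
Then the `q−1` vectors `(b_h)_{h∈𝔽_q*}` are ℤ-linearly independent, the
ℤ-submodule they span contains the module `𝔐` generated by the frequency
vectors of the solutions of `σ₁ + ⋯ + σ_{k₀} = 0`, and the `(q−1)×(q−1)` matrix
with columns `(b_h)` has determinant of absolute value `q = p^ℓ`. -/
theorem stmt13 (p : ℕ) [Fact p.Prime] (ℓ : ℕ) (hℓ : 1 ≤ ℓ)
    (F : Type) [Field F] [Fintype F] [DecidableEq F] [Algebra (ZMod p) F]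
    (v : Module.Basis (Fin ℓ) (ZMod p) F)
    (k₀ : ℕ) (hk₀ : 3 ≤ k₀)
    (b : {x : F // x ≠ 0} → ({x : F // x ≠ 0} → ℤ))
    (hb : ∀ h s : {x : F // x ≠ 0},
      b h s = (if s = h then 1 else 0) +
        ∑ i : Fin ℓ, ((v.repr (h : F) i).val : ℤ) * (if (s : F) = -(v i) then 1 else 0)) :
    LinearIndependent ℤ b ∧
    freqModule F k₀ (fun _ => (⟨1, one_ne_zero⟩ : {x : F // x ≠ 0})) ≤
      Submodule.span ℤ (Set.range b) ∧
    (Matrix.of fun s h => b h s).det.natAbs = p ^ ℓ := by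
  classical
  have hpprime : p.Prime := Fact.out
  have hppos : 0 < p := hpprime.pos
  -- the special coordinates -v j
  have hτne : ∀ j : Fin ℓ, -(v j) ≠ (0 : F) := fun j => neg_ne_zero.mpr (v.ne_zero j)
  set τ : Fin ℓ → {x : F // x ≠ 0} := fun j => ⟨-(v j), hτne j⟩ with hτ
  have hval_neg_one : ((-1 : ZMod p)).val = p - 1 := by
    obtain ⟨n, rfl⟩ : ∃ n, p = n + 1 := ⟨p - 1, by omega⟩
    simpa using ZMod.val_neg_one n
  have haτ : ∀ i j : Fin ℓ, ((v.repr ((τ j : {x : F // x ≠ 0}) : F) i).val : ℤ) =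
      if i = j then (p : ℤ) - 1 else 0 := by
    intro i j
    have : v.repr ((τ j : {x : F // x ≠ 0}) : F) = -(Finsupp.single j (1 : ZMod p)) := by
      simp [hτ, Module.Basis.repr_self]
    rw [this]
    simp only [Finsupp.coe_neg, Pi.neg_apply, Finsupp.single_apply]
    by_cases hij : i = j
    · subst hij
      simp [hval_neg_one]
      omega
    · simp [Ne.symm hij, hij]
  -- b (τ j) = p • e_{τ j}
  have hbτ : ∀ (j : Fin ℓ) (s : {x : F // x ≠ 0}), b (τ j) s = (p : ℤ) * (if s = τ j then 1 else 0) := by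
    intro j s
    rw [hb]
    have hterm : ∀ i : Fin ℓ,
        ((v.repr ((τ j : {x : F // x ≠ 0}) : F) i).val : ℤ) * (if (s : F) = -(v i) then 1 else 0)
          = if i = j then ((p : ℤ) - 1) * (if s = τ j then 1 else 0) else 0 := by
      intro i
      rw [haτ]
      by_cases hij : i = j
      · subst hij
        rw [if_pos rfl, if_pos rfl]
        congr 1
        exact if_congr ⟨fun hc => Subtype.ext hc, fun hc => congrArg Subtype.val hc⟩ rfl rfl
      · simp [hij]
    rw [Finset.sum_congr rfl fun i _ => hterm i, Finset.sum_ite_eq' Finset.univ j,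
      if_pos (Finset.mem_univ j)]
    split_ifs with hs <;> ring
  -- matrices
  set M : Matrix {x : F // x ≠ 0} {x : F // x ≠ 0} ℤ := Matrix.of fun s h => b h s with hM
  set U : Matrix {x : F // x ≠ 0} (Fin ℓ) ℤ :=
    Matrix.of fun s i => if (s : F) = -(v i) then 1 else 0 with hU
  set V : Matrix (Fin ℓ) {x : F // x ≠ 0} ℤ :=
    Matrix.of fun i h => ((v.repr (h : F) i).val : ℤ) with hV
  have hMeq : M = 1 + U * V := by
    ext s h
    rw [hM, Matrix.add_apply, Matrix.mul_apply, Matrix.of_apply, hb]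
    congr 1
    exact Finset.sum_congr rfl fun i _ => mul_comm _ _
  have hone : (1 : Matrix (Fin ℓ) (Fin ℓ) ℤ) + V * U = Matrix.diagonal fun _ => (p : ℤ) := by
    ext i j
    rw [Matrix.add_apply, Matrix.mul_apply]
    have hterm : ∀ h : {x : F // x ≠ 0}, V i h * U h j = if h = τ j then ((v.repr ((τ j : {x : F // x ≠ 0}) : F) i).val : ℤ) else 0 := by
      intro h
      by_cases hh : h = τ j
      · subst hh
        simp [hU, hV, hτ]
      · have hne : (h : F) ≠ -(v j) := fun hc => hh (Subtype.ext hc)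
        simp [hU, hV, hne, hh]
    rw [Finset.sum_congr rfl fun h _ => hterm h, Finset.sum_ite_eq' Finset.univ (τ j)]
    simp only [Finset.mem_univ, if_true, haτ i j]
    by_cases hij : i = j
    · subst hij
      simp [Matrix.one_apply, Matrix.diagonal]
    · simp [Matrix.one_apply, Matrix.diagonal, hij]
  have hdet : M.det = (p : ℤ) ^ ℓ := by
    rw [hMeq, Matrix.det_one_add_mul_comm, hone, Matrix.det_diagonal]
    simp
  have hdetne : M.det ≠ 0 := by
    rw [hdet]
    exact pow_ne_zero _ (by exact_mod_cast hppos.ne')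
  -- linear independence
  have hli : LinearIndependent ℤ b := by
    rw [Fintype.linearIndependent_iff]
    intro g hg i
    have hmv : M.mulVec g = 0 := by
      funext s
      have := congrFun hg s
      simpa [Matrix.mulVec, dotProduct, hM, mul_comm] using this
    exact congrFun (Matrix.eq_zero_of_mulVec_eq_zero hdetne hmv) i
  refine ⟨hli, ?_, by rw [hdet, ← Nat.cast_pow, Int.natAbs_natCast]⟩
  -- span containment
  have key : ∀ w : {x : F // x ≠ 0} → ℤ, (∑ s : {x : F // x ≠ 0}, w s • (s : F)) = 0 →
      w ∈ Submodule.span ℤ (Set.range b) := by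
    intro w hw
    set S : Fin ℓ → ℤ := fun j => ∑ h : {x : F // x ≠ 0}, w h * ((v.repr (h : F) j).val : ℤ) with hS
    have hdvd : ∀ j, (p : ℤ) ∣ S j := by
      intro j
      rw [← ZMod.intCast_zmod_eq_zero_iff_dvd]
      have hcast : ((S j : ℤ) : ZMod p) = ∑ h : {x : F // x ≠ 0}, (w h : ZMod p) * v.repr (h : F) j := by
        rw [hS]
        push_cast
        refine Finset.sum_congr rfl fun h _ => ?_
        congr 1
        rw [ZMod.natCast_val, ZMod.cast_id]
      have h0 : v.repr (∑ s : {x : F // x ≠ 0}, w s • (s : F)) j = 0 := by rw [hw]; simp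
      rw [map_sum] at h0
      have h0' : ∑ s : {x : F // x ≠ 0}, v.repr (w s • (s : F)) j = 0 := by
        rw [← h0]
        exact (Finset.sum_apply' j).symm
      have h0'' : ∑ h : {x : F // x ≠ 0}, (w h : ZMod p) * v.repr (h : F) j = 0 := by
        rw [← h0']
        refine Finset.sum_congr rfl fun h _ => ?_
        rw [map_zsmul v.repr (w h) ((h : {x : F // x ≠ 0}) : F), Finsupp.smul_apply,
          zsmul_eq_mul]
      rw [hcast, h0'']
    set t : Fin ℓ → ℤ := fun j => S j / p with ht
    have hpt : ∀ j, (p : ℤ) * t j = S j := fun j => Int.mul_ediv_cancel' (hdvd j)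
    have hcomb : w = (∑ h : {x : F // x ≠ 0}, w h • b h) - ∑ j : Fin ℓ, t j • b (τ j) := by
      funext s
      have hst : ∀ i, ((s : F) = -(v i)) ↔ s = τ i := fun i => by rw [Subtype.ext_iff]
      have h1 : ∑ h : {x : F // x ≠ 0}, w h * b h s = w s + ∑ j : Fin ℓ, S j * (if s = τ j then 1 else 0) := by
        have hexp : ∀ h : {x : F // x ≠ 0}, w h * b h s =
            (if s = h then w h else 0) +
              ∑ i : Fin ℓ, (w h * ((v.repr (h : F) i).val : ℤ)) * (if s = τ i then 1 else 0) := by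
          intro h
          rw [hb, mul_add, Finset.mul_sum]
          congr 1
          · by_cases hsh : s = h <;> simp [hsh]
          · exact Finset.sum_congr rfl fun i _ => by
              rw [if_congr (hst i) rfl rfl]; ring
        rw [Finset.sum_congr rfl fun h _ => hexp h, Finset.sum_add_distrib,
          Finset.sum_ite_eq Finset.univ s w, Finset.sum_comm]
        simp only [Finset.mem_univ, if_true]
        congr 1
        exact Finset.sum_congr rfl fun j _ => by rw [hS, Finset.sum_mul]
      have h2 : ∑ j : Fin ℓ, t j * b (τ j) s =
          ∑ j : Fin ℓ, S j * (if s = τ j then 1 else 0) := by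
        refine Finset.sum_congr rfl fun j _ => ?_
        rw [hbτ j s, ← mul_assoc, mul_comm (t j) (p : ℤ), hpt j]
      simp only [Pi.sub_apply, Finset.sum_apply, Pi.smul_apply, smul_eq_mul]
      rw [h1, h2]
      ring
    rw [hcomb]
    refine Submodule.sub_mem _ (Submodule.sum_mem _ fun h _ => ?_)
      (Submodule.sum_mem _ fun j _ => ?_)
    · exact Submodule.smul_mem _ _ (Submodule.subset_span (Set.mem_range_self h))
    · exact Submodule.smul_mem _ _ (Submodule.subset_span (Set.mem_range_self (τ j)))
  rw [freqModule, Submodule.span_le]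
  rintro w ⟨σ, hσ, rfl⟩
  have hσ0 : ∑ i, σ i = 0 := by
    simpa [solSet] using hσ
  refine key _ ?_
  -- ∑ s : {x : F // x ≠ 0}, freq σ s • s = ∑ i, σ i = 0
  have hstep : (∑ x ∈ Finset.univ.filter (fun x : F => x ≠ 0),
        ((Finset.univ.filter fun i => σ i = x).card : ℤ) • x) =
      ∑ s : {x : F // x ≠ 0}, (freq F k₀ σ s) • ((s : F)) :=
    Finset.sum_subtype (Finset.univ.filter (fun x : F => x ≠ 0)) (fun x => by simp)
      (fun x => ((Finset.univ.filter fun i => σ i = x).card : ℤ) • x)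
  rw [← hstep]
  have hfull : ∑ x ∈ Finset.univ.filter (fun x : F => x ≠ 0),
      ((Finset.univ.filter fun i => σ i = x).card : ℤ) • x =
      ∑ x : F, ((Finset.univ.filter fun i => σ i = x).card : ℤ) • x := by
    refine Finset.sum_filter_of_ne fun x _ hx => ?_
    intro hx0
    apply hx
    rw [hx0, smul_zero]
  rw [hfull]
  have hcount : ∑ x : F, ((Finset.univ.filter fun i => σ i = x).card : ℤ) • x = ∑ i, σ i := by
    calc ∑ x : F, ((Finset.univ.filter fun i => σ i = x).card : ℤ) • x
        = ∑ x : F, ∑ i ∈ Finset.univ.filter fun i => σ i = x, σ i := by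
          refine Finset.sum_congr rfl fun x _ => ?_
          rw [Finset.sum_congr rfl fun i hi => (Finset.mem_filter.mp hi).2,
            Finset.sum_const]
          simp
      _ = ∑ i, σ i := by
          exact Finset.sum_fiberwise _ _ _
  rw [hcount, hσ0]
end

section
/- M ∩ (𝔡ℤ)^m = 𝔡·M; that is, a vector y ∈ M has all of its coordinates divisible by 𝔡 if and only if y = 𝔡·x for some x ∈ M. -/
/-- Let `b₁, …, b_m ∈ ℤ^m` be vectors whose `m × m` matrix has
determinant of absolute value `q`, let `M ⊆ ℤ^m` be the ℤ-submodule they span,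
and let `𝔡 ≥ 1` be coprime to `q`.  Then a vector `y ∈ M` has all of its
coordinates divisible by `𝔡` if and only if `y = 𝔡 • x` for some `x ∈ M`. -/
theorem stmt14 (m q d : ℕ) (hm : 1 ≤ m) (hq : 1 ≤ q) (hd : 1 ≤ d)
    (b : Fin m → (Fin m → ℤ))
    (hdet : (Matrix.of fun i j : Fin m => b j i).det.natAbs = q)
    (hcop : Nat.Coprime d q) :
    ∀ y ∈ Submodule.span ℤ (Set.range b),
      ((∀ i : Fin m, (d : ℤ) ∣ y i) ↔
        ∃ x ∈ Submodule.span ℤ (Set.range b), y = (d : ℤ) • x) := by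
  intro y hy
  constructor
  · intro hdvd
    rw [Submodule.mem_span_range_iff_exists_fun ℤ] at hy
    obtain ⟨c, hc⟩ := hy
    set A : Matrix (Fin m) (Fin m) ℤ := Matrix.of fun i j => b j i with hA
    have hyA : y = A.mulVec c := by
      funext i
      rw [← hc]
      simp [Matrix.mulVec, dotProduct, A, mul_comm]
    have hadj : ∀ i, A.det * c i = (A.adjugate.mulVec y) i := by
      intro i
      rw [hyA, Matrix.mulVec_mulVec, Matrix.adjugate_mul,
        Matrix.smul_mulVec, Matrix.one_mulVec]
      simp
    have hcop' : IsCoprime (d : ℤ) A.det := by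
      rw [Int.isCoprime_iff_gcd_eq_one]
      simpa [Int.gcd, hdet] using hcop
    have hdc : ∀ i, (d : ℤ) ∣ c i := by
      intro i
      have h1 : (d : ℤ) ∣ A.det * c i := by
        rw [hadj i]
        simp only [Matrix.mulVec, dotProduct]
        exact Finset.dvd_sum fun j _ => (hdvd j).mul_left _
      exact hcop'.dvd_of_dvd_mul_left h1
    choose c' hc' using hdc
    refine ⟨∑ i, c' i • b i, ?_, ?_⟩
    · rw [Submodule.mem_span_range_iff_exists_fun ℤ]
      exact ⟨c', rfl⟩
    · rw [← hc, Finset.smul_sum]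
      congr 1
      funext i
      rw [smul_smul, ← hc' i]
  · rintro ⟨x, hx, rfl⟩
    intro i
    exact ⟨x i, rfl⟩
end

section
/- The function Φ is strictly decreasing on [0,1]; in particular, Φ(z) < Φ(0) for all 0 < z ≤ 1. -/
open Real Set Finset


/-- The real zeta function `ζ(s) = Σ_{ℓ≥1} ℓ^{−s}`, written as a sum over `ℕ`. -/
noncomputable def zetaReal (s : ℝ) : ℝ := ∑' n : ℕ, ((n : ℝ) + 1) ^ (-s)

/-- The generating function `D(z) = ζ(α)⁻¹ · Σ_{ℓ≥1} z^ℓ/ℓ^α` of the power-law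
degree distribution `P[d = ℓ] ∝ ℓ^{−α}`. -/
noncomputable def powerLawD (α : ℝ) (z : ℝ) : ℝ :=
  (zetaReal α)⁻¹ * ∑' n : ℕ, z ^ (n + 1) / ((n : ℝ) + 1) ^ α

/-- The function `Φ(z) = D(1 − z^{k−1}) − (ζ(α−1)/(ζ(α)·k))·(1 − k·z^{k−1} + (k−1)·z^k)`
for the power-law example. -/
noncomputable def powerLawPhi (α : ℝ) (k : ℕ) (z : ℝ) : ℝ :=
  powerLawD α (1 - z ^ (k - 1)) -
    (zetaReal (α - 1) / (zetaReal α * (k : ℝ))) *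
      (1 - (k : ℝ) * z ^ (k - 1) + ((k : ℝ) - 1) * z ^ k)


lemma summable_rpow_aux {s : ℝ} (hs : 1 < s) :
    Summable (fun n : ℕ => ((n : ℝ) + 1) ^ (-s)) := by
  have h : Summable (fun n : ℕ => (n : ℝ) ^ (-s)) :=
    Real.summable_nat_rpow.mpr (by linarith)
  have h2 := (summable_nat_add_iff 1).mpr h
  refine h2.congr fun n => ?_
  push_cast
  rfl

lemma one_le_zetaReal' {s : ℝ} (hs : 1 < s) :
    1 ≤ ∑' n : ℕ, ((n : ℝ) + 1) ^ (-s) := by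
  have hsum := summable_rpow_aux hs
  have h0 : (((0:ℕ) : ℝ) + 1) ^ (-s) = 1 := by norm_num
  calc (1:ℝ) = (((0:ℕ):ℝ) + 1) ^ (-s) := h0.symm
    _ ≤ _ := Summable.le_tsum hsum 0 (fun j _ => Real.rpow_nonneg (by positivity) _)

lemma mul_neg_log_le {t : ℝ} (h0 : 0 < t) (h1 : t < 1) :
    t * (-Real.log t) ≤ (Real.exp 1)⁻¹ := by
  have he : (0:ℝ) < Real.exp 1 := Real.exp_pos 1
  have hx : (0:ℝ) < (Real.exp 1 * t)⁻¹ := by positivity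
  have h := Real.log_le_sub_one_of_pos hx
  rw [Real.log_inv, Real.log_mul (ne_of_gt he) (ne_of_gt h0), Real.log_exp] at h
  have h2 : -Real.log t ≤ (Real.exp 1 * t)⁻¹ := by linarith
  have h3 : t * (-Real.log t) ≤ t * (Real.exp 1 * t)⁻¹ :=
    mul_le_mul_of_nonneg_left h2 h0.le
  have h4 : t * (Real.exp 1 * t)⁻¹ = (Real.exp 1)⁻¹ := by
    field_simp
  linarith

lemma partial_identity (v : ℝ) (N : ℕ) :
    ∑ n ∈ Finset.range (N+1), (1 - v^n)/((n:ℝ)*((n:ℝ)+1)) =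
    (1-v) * ∑ i ∈ Finset.range N, v^i/((i:ℝ)+1) - (1 - v^N)/((N:ℝ)+1) := by
  induction N with
  | zero => simp
  | succ N ih =>
    rw [Finset.sum_range_succ, ih,
      Finset.sum_range_succ (f := fun i => v^i/((i:ℝ)+1))]
    have hN1 : ((N:ℝ)+1) ≠ 0 := by positivity
    have hN2 : ((N:ℝ)+2) ≠ 0 := by positivity
    push_cast
    field_simp
    ring

lemma sum_pow_div_le_neg_log {v : ℝ} (h0 : 0 < v) (h1 : v < 1) (N : ℕ) :
    ∑ i ∈ Finset.range N, v^(i+1)/((i:ℝ)+1) ≤ -Real.log (1 - v) := by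
  have habs : |v| < 1 := by rw [abs_of_pos h0]; exact h1
  set b : ℕ → ℝ := fun m => -Real.log (1-v) + v^(m+1)/(1-v) with hb
  have hv1 : (0:ℝ) < 1 - v := by linarith
  have htend : Filter.Tendsto b Filter.atTop (nhds (-Real.log (1-v))) := by
    have h0' : Filter.Tendsto (fun m : ℕ => v^(m+1)) Filter.atTop (nhds 0) := by
      have := tendsto_pow_atTop_nhds_zero_of_lt_one h0.le h1
      simpa using (this.const_mul v).congr (fun m => by rw [← pow_succ'])
    have := ((h0'.div_const (1-v)).const_add (-Real.log (1-v)))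
    simpa using this
  refine ge_of_tendsto htend ?_
  rw [Filter.eventually_atTop]
  refine ⟨N, fun m hm => ?_⟩
  have hmono : ∑ i ∈ Finset.range N, v^(i+1)/((i:ℝ)+1)
      ≤ ∑ i ∈ Finset.range m, v^(i+1)/((i:ℝ)+1) := by
    apply Finset.sum_le_sum_of_subset_of_nonneg
    · exact Finset.range_subset_range.mpr hm
    · intro i _ _; positivity
  have hlog := Real.abs_log_sub_add_sum_range_le habs m
  rw [abs_le] at hlog
  have h2 := hlog.2
  rw [abs_of_pos h0] at h2
  -- h2 : ∑ i in range m, v^(i+1)/(i+1) + log (1-v) ≤ v^(m+1)/(1-v)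
  have : ∑ i ∈ Finset.range m, v^(i+1)/((i:ℝ)+1) ≤ b m := by
    simp only [hb]
    push_cast at h2 ⊢
    linarith
  linarith

lemma key_ineq {α : ℝ} (hα : 3 < α) {u z : ℝ} (hz0 : 0 < z) (hz1 : z < 1)
    (hu0 : 0 < u) (hu1 : u < 1) (huz : u ≤ z)
    (hulog : u * (-Real.log u) ≤ 2 * (Real.exp 1)⁻¹ * z) :
    (1 - z) * (∑' n : ℕ, ((n:ℝ)+1)^(-(α-1))) <
      ∑' n : ℕ, (1 - u)^n * ((n:ℝ)+1)^(-(α-1)) := by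
  set s : ℝ := α - 1 with hsdef
  have hs2 : 2 < s := by simp only [hsdef]; linarith
  have hsumA : Summable (fun n : ℕ => ((n:ℝ)+1)^(-s)) := summable_rpow_aux (by linarith)
  have hv0 : (0:ℝ) < 1 - u := by linarith
  have hv1 : 1 - u < 1 := by linarith
  have hbase : ∀ n : ℕ, (0:ℝ) < (n:ℝ) + 1 := fun n => by positivity
  have hrpos : ∀ n : ℕ, (0:ℝ) < ((n:ℝ)+1)^(-s) := fun n => Real.rpow_pos_of_pos (hbase n) _
  have hSnn : ∀ n : ℕ, 0 ≤ (1-u)^n * ((n:ℝ)+1)^(-s) := fun n => by positivity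
  have hpow_le : ∀ n : ℕ, (1-u)^n ≤ 1 := fun n => pow_le_one₀ hv0.le (by linarith)
  have hSle : ∀ n : ℕ, (1-u)^n * ((n:ℝ)+1)^(-s) ≤ ((n:ℝ)+1)^(-s) := fun n =>
    mul_le_of_le_one_left (hrpos n).le (hpow_le n)
  have hsumS : Summable (fun n : ℕ => (1-u)^n * ((n:ℝ)+1)^(-s)) :=
    Summable.of_nonneg_of_le hSnn hSle hsumA
  have hTnn : ∀ n : ℕ, 0 ≤ (1 - (1-u)^n) * ((n:ℝ)+1)^(-s) := fun n => by
    have := hpow_le n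
    have := hrpos n
    nlinarith
  have hTle : ∀ n : ℕ, (1 - (1-u)^n) * ((n:ℝ)+1)^(-s) ≤ ((n:ℝ)+1)^(-s) := fun n => by
    have h1 : (0:ℝ) ≤ (1-u)^n := by positivity
    have := hrpos n
    nlinarith
  have hsumT : Summable (fun n : ℕ => (1 - (1-u)^n) * ((n:ℝ)+1)^(-s)) :=
    Summable.of_nonneg_of_le hTnn hTle hsumA
  set S := ∑' n : ℕ, (1-u)^n * ((n:ℝ)+1)^(-s) with hS
  set T := ∑' n : ℕ, (1 - (1-u)^n) * ((n:ℝ)+1)^(-s) with hT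
  set A := ∑' n : ℕ, ((n:ℝ)+1)^(-s) with hA
  have hsplit : A = S + T := by
    rw [hS, hT, ← Summable.tsum_add hsumS hsumT]
    exact tsum_congr fun n => by ring
  have hA1 : 1 ≤ A := by
    have h0 : (((0:ℕ):ℝ) + 1) ^ (-s) = 1 := by norm_num
    calc (1:ℝ) = (((0:ℕ):ℝ) + 1) ^ (-s) := h0.symm
      _ ≤ A := Summable.le_tsum hsumA 0 (fun j _ => (hrpos j).le)
  rcases le_or_gt ((1-z) * A) 1 with hcase | hcase
  · -- Case A : S > 1
    have h2 : 1 + (1-u) * ((1:ℝ)+1)^(-s) ≤ S := by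
      have hsum2 := Summable.sum_le_tsum (Finset.range 2) (fun i _ => hSnn i) hsumS
      simpa [Finset.sum_range_succ] using hsum2
    have hpos : (0:ℝ) < (1-u) * ((1:ℝ)+1)^(-s) := by
      have : (0:ℝ) < ((1:ℝ)+1)^(-s) := Real.rpow_pos_of_pos (by norm_num) _
      positivity
    linarith
  · -- Case B
    have hz1' : (0:ℝ) < 1 - z := by linarith
    have hTbound : T ≤ u * (-Real.log u) / (1-u) := by
      apply Real.tsum_le_of_sum_range_le hTnn
      intro N
      have step1 : ∑ n ∈ Finset.range N, (1 - (1-u)^n) * ((n:ℝ)+1)^(-s)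
          ≤ ∑ n ∈ Finset.range N, (1 - (1-u)^n) / ((n:ℝ)*((n:ℝ)+1)) := by
        apply Finset.sum_le_sum
        intro n _
        match n with
        | 0 => simp
        | (m+1) =>
          have hc : (0:ℝ) ≤ 1 - (1-u)^(m+1) := by
            have := hpow_le (m+1); linarith
          have hb1 : (1:ℝ) ≤ ((m:ℝ)+1) + 1 := by have : (0:ℝ) ≤ (m:ℝ) := Nat.cast_nonneg m; linarith
          have hr2 : (((m+1:ℕ):ℝ)+1)^(-s) ≤ (((m+1:ℕ):ℝ)+1)^(-(2:ℝ)) := by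
            apply Real.rpow_le_rpow_of_exponent_le
            · push_cast; linarith
            · linarith
          have hr3 : (((m+1:ℕ):ℝ)+1)^(-(2:ℝ)) ≤ 1 / (((m+1:ℕ):ℝ)*(((m+1:ℕ):ℝ)+1)) := by
            push_cast
            rw [Real.rpow_neg (by positivity), show ((2:ℝ) = ((2:ℕ):ℝ)) by norm_num,
              Real.rpow_natCast]
            rw [inv_eq_one_div]
            apply div_le_div_of_nonneg_left (by norm_num) (by positivity)
            nlinarith
          calc (1 - (1-u)^(m+1)) * (((m+1:ℕ):ℝ)+1)^(-s)
              ≤ (1 - (1-u)^(m+1)) * (1 / (((m+1:ℕ):ℝ)*(((m+1:ℕ):ℝ)+1))) := by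
                apply mul_le_mul_of_nonneg_left (le_trans hr2 hr3) hc
            _ = (1 - (1-u)^(m+1)) / (((m+1:ℕ):ℝ)*(((m+1:ℕ):ℝ)+1)) := by ring
      have step2 : ∑ n ∈ Finset.range N, (1 - (1-u)^n) / ((n:ℝ)*((n:ℝ)+1))
          ≤ u * (-Real.log u) / (1-u) := by
        match N with
        | 0 =>
          simp
          apply div_nonneg ?_ hv0.le
          nlinarith [Real.log_neg hu0 hu1]
        | (M+1) =>
          rw [partial_identity (1-u) M]
          have hnn : (0:ℝ) ≤ (1 - (1-u)^M)/((M:ℝ)+1) := by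
            have := hpow_le M
            have : (0:ℝ) ≤ 1 - (1-u)^M := by linarith
            positivity
          have heq : (1 - (1-u)) * ∑ i ∈ Finset.range M, (1-u)^i/((i:ℝ)+1)
              = u/(1-u) * ∑ i ∈ Finset.range M, (1-u)^(i+1)/((i:ℝ)+1) := by
            rw [Finset.mul_sum, Finset.mul_sum]
            apply Finset.sum_congr rfl
            intro i _
            field_simp
            ring
          have hlog := sum_pow_div_le_neg_log hv0 hv1 M
          rw [show (1:ℝ) - (1-u) = u by ring] at hlog
          have hsum_nn : (0:ℝ) ≤ ∑ i ∈ Finset.range M, (1-u)^(i+1)/((i:ℝ)+1) := by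
            apply Finset.sum_nonneg; intro i _; positivity
          have hfrac : (0:ℝ) ≤ u/(1-u) := by positivity
          calc (1 - (1-u)) * ∑ i ∈ Finset.range M, (1-u)^i/((i:ℝ)+1) - (1 - (1-u)^M)/((M:ℝ)+1)
              ≤ (1 - (1-u)) * ∑ i ∈ Finset.range M, (1-u)^i/((i:ℝ)+1) := by linarith
            _ = u/(1-u) * ∑ i ∈ Finset.range M, (1-u)^(i+1)/((i:ℝ)+1) := heq
            _ ≤ u/(1-u) * (-Real.log u) := by
                apply mul_le_mul_of_nonneg_left hlog hfrac
            _ = u * (-Real.log u) / (1-u) := by ring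
      linarith
    -- chain of bounds
    have he : (0:ℝ) < Real.exp 1 := Real.exp_pos 1
    have hlogu : (0:ℝ) < -Real.log u := by
      have : Real.log u < 0 := Real.log_neg hu0 hu1
      linarith
    have hchain1 : u * (-Real.log u) / (1-u) ≤ 2 * (Real.exp 1)⁻¹ * z / (1-z) := by
      apply div_le_div₀ (by positivity) hulog hz1'
      linarith
    have h2e : 2 * (Real.exp 1)⁻¹ < 1 := by
      have h2lt : (2:ℝ) < Real.exp 1 := by
        have := Real.exp_one_gt_d9
        norm_num at this ⊢
        linarith
      have hee : Real.exp 1 * (Real.exp 1)⁻¹ = 1 := mul_inv_cancel₀ (ne_of_gt he)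
      nlinarith [inv_pos.mpr he]
    have hchain2 : 2 * (Real.exp 1)⁻¹ * z / (1-z) < z / (1-z) := by
      apply div_lt_div_of_pos_right ?_ hz1'
      nlinarith
    have hfinal : z / (1-z) < z * A := by
      rw [div_lt_iff₀ hz1']
      nlinarith
    have hexp : (1-z)*A = A - z*A := by ring
    linarith

-- rpow helper
lemma rpow_helper (α : ℝ) (n : ℕ) :
    ((n:ℝ)+1) / ((n:ℝ)+1)^α = ((n:ℝ)+1)^(-(α-1)) := by
  have h : (0:ℝ) < (n:ℝ)+1 := by positivity
  rw [show -(α-1) = 1 + (-α) by ring, Real.rpow_add h, Real.rpow_one,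
    Real.rpow_neg h.le, div_eq_mul_inv]

lemma deriv_neg_aux {α : ℝ} (hα : 3 < α) {k : ℕ} (hk : 3 ≤ k) {x : ℝ}
    (hx0 : 0 < x) (hx1 : x < 1) :
    ∃ d, d < 0 ∧ HasDerivAt (powerLawPhi α k) d x := by
  have hζsum : Summable (fun n : ℕ => ((n:ℝ)+1)^(-α)) := summable_rpow_aux (by linarith)
  have hζpos : 0 < zetaReal α := lt_of_lt_of_le one_pos (one_le_zetaReal' (by linarith))
  have hApos : 0 < zetaReal (α-1) :=
    lt_of_lt_of_le one_pos (one_le_zetaReal' (by linarith))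
  have hkR : (0:ℝ) < (k:ℝ) := by
    have : (3:ℝ) ≤ (k:ℝ) := by exact_mod_cast hk
    linarith
  have hk1 : 1 ≤ k - 1 := by omega
  have hk2 : k - 1 - 1 = k - 2 := by omega
  have hk3 : k - 2 + 1 = k - 1 := by omega
  have hkc : ((k-1:ℕ):ℝ) = (k:ℝ) - 1 := by
    have : (1:ℕ) ≤ k := by omega
    push_cast [Nat.cast_sub this]
    ring
  set w : ℝ := 1 - x ^ (k-1) with hw
  have hxk0 : 0 < x ^ (k-1) := pow_pos hx0 _
  have hxk1 : x ^ (k-1) < 1 := pow_lt_one₀ hx0.le hx1 (by omega)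
  have hw0 : 0 < w := by simp only [hw]; linarith
  have hw1 : w < 1 := by simp only [hw]; linarith
  -- derivative of F at w
  have hF : HasDerivAt (fun y : ℝ => ∑' n : ℕ, y ^ (n+1) / ((n:ℝ)+1)^α)
      (∑' n : ℕ, ((n:ℝ)+1) * w ^ n / ((n:ℝ)+1)^α) w := by
    have main := hasDerivAt_tsum_of_isPreconnected
      (g := fun (n : ℕ) (y : ℝ) => y ^ (n+1) / ((n:ℝ)+1)^α)
      (g' := fun (n : ℕ) (y : ℝ) => ((n:ℝ)+1) * y ^ n / ((n:ℝ)+1)^α)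
      (u := fun n : ℕ => ((n:ℝ)+1)^(-(α-1)))
      (summable_rpow_aux (by linarith : (1:ℝ) < α - 1)) isOpen_Ioo
      ((convex_Ioo (-1:ℝ) 1).isPreconnected)
      ?_ ?_ (show (0:ℝ) ∈ Set.Ioo (-1:ℝ) 1 by norm_num) ?_
      (show w ∈ Set.Ioo (-1:ℝ) 1 by constructor <;> [linarith; linarith])
    · exact main
    · intro n y _
      have h := (hasDerivAt_pow (n+1) y).div_const (((n:ℝ)+1)^α)
      have hcast : ((n+1:ℕ):ℝ) = (n:ℝ)+1 := by push_cast; ring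
      simpa [hcast, Nat.add_sub_cancel] using h
    · intro n y hy
      have hbase : (0:ℝ) < (n:ℝ)+1 := by positivity
      have hrp : (0:ℝ) < ((n:ℝ)+1)^α := Real.rpow_pos_of_pos hbase α
      have hya : |y| ≤ 1 := by
        rw [abs_le]; exact ⟨hy.1.le, hy.2.le⟩
      rw [Real.norm_eq_abs, abs_div, abs_mul, abs_pow, abs_of_pos hbase,
        abs_of_pos hrp]
      have hyn : |y|^n ≤ 1 := pow_le_one₀ (abs_nonneg y) hya
      calc ((n:ℝ)+1) * |y|^n / ((n:ℝ)+1)^α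
          ≤ ((n:ℝ)+1) * 1 / ((n:ℝ)+1)^α := by
            gcongr
        _ = ((n:ℝ)+1) / ((n:ℝ)+1)^α := by ring
        _ = ((n:ℝ)+1)^(-(α-1)) := rpow_helper α n
    · apply Summable.congr summable_zero
      intro n
      simp [zero_pow (Nat.succ_ne_zero n)]
  -- inner derivative
  have hinner : HasDerivAt (fun z : ℝ => 1 - z ^ (k-1))
      (-(((k-1:ℕ):ℝ) * x ^ (k-2))) x := by
    have h := (hasDerivAt_pow (k-1) x).const_sub 1
    rwa [hk2] at h
  have hcomp : HasDerivAt (fun z : ℝ => ∑' n : ℕ, (1 - z^(k-1)) ^ (n+1) / ((n:ℝ)+1)^α)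
      ((∑' n : ℕ, ((n:ℝ)+1) * w ^ n / ((n:ℝ)+1)^α) * (-(((k-1:ℕ):ℝ) * x ^ (k-2)))) x := by
    exact HasDerivAt.comp x hF hinner
  -- polynomial part
  have hpoly : HasDerivAt (fun z : ℝ => 1 - (k:ℝ) * z^(k-1) + ((k:ℝ)-1) * z^k)
      (-((k:ℝ) * (((k-1:ℕ):ℝ) * x^(k-2))) + ((k:ℝ)-1) * (((k:ℕ):ℝ) * x^(k-1))) x := by
    have h1 : HasDerivAt (fun z : ℝ => 1 - (k:ℝ) * z^(k-1))
        (-((k:ℝ) * (((k-1:ℕ):ℝ) * x^(k-2)))) x := by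
      have h := ((hasDerivAt_pow (k-1) x).const_mul (k:ℝ)).const_sub 1
      rwa [hk2] at h
    have h2 : HasDerivAt (fun z : ℝ => ((k:ℝ)-1) * z^k)
        (((k:ℝ)-1) * (((k:ℕ):ℝ) * x^(k-1))) x :=
      (hasDerivAt_pow k x).const_mul ((k:ℝ)-1)
    exact h1.add h2
  -- full derivative
  have hΦeq : powerLawPhi α k = fun z : ℝ =>
      (zetaReal α)⁻¹ * ∑' n : ℕ, (1 - z^(k-1)) ^ (n+1) / ((n:ℝ)+1)^α -
      (zetaReal (α-1) / (zetaReal α * (k:ℝ))) *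
        (1 - (k:ℝ) * z^(k-1) + ((k:ℝ)-1) * z^k) := by
    funext z
    simp only [powerLawPhi, powerLawD]
  set Stilde := ∑' n : ℕ, ((n:ℝ)+1) * w ^ n / ((n:ℝ)+1)^α with hSt
  set d : ℝ := (zetaReal α)⁻¹ * (Stilde * (-(((k-1:ℕ):ℝ) * x ^ (k-2)))) -
      (zetaReal (α-1) / (zetaReal α * (k:ℝ))) *
        (-((k:ℝ) * (((k-1:ℕ):ℝ) * x^(k-2))) + ((k:ℝ)-1) * (((k:ℕ):ℝ) * x^(k-1))) with hd
  refine ⟨d, ?_, ?_⟩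
  · -- d < 0
    have hSeq : Stilde = ∑' n : ℕ, (1 - x^(k-1)) ^ n * ((n:ℝ)+1)^(-(α-1)) := by
      rw [hSt]
      apply tsum_congr
      intro n
      rw [← rpow_helper α n, ← hw]
      ring
    -- key inequality
    have hulog : x^(k-1) * (-Real.log (x^(k-1))) ≤ 2 * (Real.exp 1)⁻¹ * x := by
      have hlx : 0 < -Real.log x := by
        have := Real.log_neg hx0 hx1; linarith
      have hxm : 0 < x ^ (k-2) := pow_pos hx0 _
      have hxm1 : x ^ (k-2) < 1 := pow_lt_one₀ hx0.le hx1 (by omega)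
      have hL := mul_neg_log_le hxm hxm1
      rw [Real.log_pow] at hL
      -- hL : x^(k-2) * -( (k-2) * log x ) ≤ e⁻¹
      have hm1 : (1:ℝ) ≤ ((k-2:ℕ):ℝ) := by
        have : (1:ℕ) ≤ k - 2 := by omega
        exact_mod_cast this
      have hq : 0 ≤ x^(k-2) * (-Real.log x) := by positivity
      have hkey : ((k-1:ℕ):ℝ) * (x^(k-2) * (-Real.log x)) ≤ 2 * (Real.exp 1)⁻¹ := by
        have hc : ((k-1:ℕ):ℝ) ≤ 2 * ((k-2:ℕ):ℝ) := by
          have : (k-1:ℕ) ≤ 2 * (k-2:ℕ) := by omega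
          exact_mod_cast this
        have h1 : ((k-1:ℕ):ℝ) * (x^(k-2) * (-Real.log x))
            ≤ 2 * ((k-2:ℕ):ℝ) * (x^(k-2) * (-Real.log x)) :=
          mul_le_mul_of_nonneg_right hc hq
        have h2 : ((k-2:ℕ):ℝ) * (x^(k-2) * (-Real.log x)) ≤ (Real.exp 1)⁻¹ := by
          nlinarith [hL]
        linarith
      rw [Real.log_pow]
      have hxpow : x^(k-1) = x * x^(k-2) := by
        rw [← pow_succ']
        congr 1
        omega
      rw [hxpow]
      calc x * x^(k-2) * -(((k-1:ℕ):ℝ) * Real.log x)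
          = x * (((k-1:ℕ):ℝ) * (x^(k-2) * (-Real.log x))) := by ring
        _ ≤ x * (2 * (Real.exp 1)⁻¹) :=
            mul_le_mul_of_nonneg_left hkey hx0.le
        _ = 2 * (Real.exp 1)⁻¹ * x := by ring
    have hkey := key_ineq hα hx0 hx1 hxk0 hxk1
      (pow_le_of_le_one hx0.le hx1.le (by omega)) hulog
    rw [← hSeq] at hkey
    -- hkey : (1-x) * A < Stilde where A = tsum = zetaReal (α-1)
    have hAeq : zetaReal (α-1) = ∑' n : ℕ, ((n:ℝ)+1)^(-(α-1)) := rfl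
    rw [← hAeq] at hkey
    -- now algebra: d = ((k:ℝ)-1) * x^(k-2) * (zetaReal α)⁻¹ * ((1-x) * zetaReal (α-1) - Stilde)
    have hxk1eq : x^(k-1) = x^(k-2) * x := by rw [← pow_succ, hk3]
    have hdeq : d = ((k:ℝ)-1) * x^(k-2) * (zetaReal α)⁻¹ *
        ((1-x) * zetaReal (α-1) - Stilde) := by
      rw [hd, hkc, hxk1eq]
      field_simp
      ring
    rw [hdeq]
    have hP : 0 < ((k:ℝ)-1) * x^(k-2) * (zetaReal α)⁻¹ := by
      have : (3:ℝ) ≤ (k:ℝ) := by exact_mod_cast hk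
      have h1 : 0 < (k:ℝ)-1 := by linarith
      have h2 : 0 < x^(k-2) := pow_pos hx0 _
      positivity
    exact mul_neg_of_pos_of_neg hP (by linarith)
  · -- HasDerivAt
    rw [hΦeq, hd]
    exact (hcomp.const_mul _).sub (hpoly.const_mul _)

lemma continuousOn_phi {α : ℝ} (hα : 3 < α) (k : ℕ) :
    ContinuousOn (powerLawPhi α k) (Set.Icc 0 1) := by
  have hΦeq : powerLawPhi α k = fun z : ℝ =>
      (zetaReal α)⁻¹ * ∑' n : ℕ, (1 - z^(k-1)) ^ (n+1) / ((n:ℝ)+1)^α -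
      (zetaReal (α-1) / (zetaReal α * (k:ℝ))) *
        (1 - (k:ℝ) * z^(k-1) + ((k:ℝ)-1) * z^k) := by
    funext z
    simp only [powerLawPhi, powerLawD]
  rw [hΦeq]
  apply ContinuousOn.sub
  · apply ContinuousOn.mul continuousOn_const
    apply continuousOn_tsum (u := fun n : ℕ => ((n:ℝ)+1)^(-α))
    · intro n
      apply Continuous.continuousOn
      exact ((continuous_const.sub (continuous_pow (k-1))).pow (n+1)).div_const _
    · exact summable_rpow_aux (by linarith)
    · intro n z hz
      have hbase : (0:ℝ) < (n:ℝ)+1 := by positivity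
      have hrp : (0:ℝ) < ((n:ℝ)+1)^α := Real.rpow_pos_of_pos hbase α
      have hz0 := hz.1
      have hz1 := hz.2
      have hzk : 0 ≤ z^(k-1) := pow_nonneg hz0 _
      have hzk1 : z^(k-1) ≤ 1 := pow_le_one₀ hz0 hz1
      have habs : |1 - z^(k-1)| ≤ 1 := by
        rw [abs_le]; constructor <;> linarith
      rw [Real.norm_eq_abs, abs_div, abs_pow, abs_of_pos hrp,
        Real.rpow_neg hbase.le]
      rw [inv_eq_one_div]
      gcongr
      exact pow_le_one₀ (abs_nonneg _) habs
  · apply Continuous.continuousOn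
    continuity


/-- For `α > 3` and `k ≥ 3`, the function `Φ` of the power-law
example is strictly decreasing on `[0,1]`; in particular `Φ(z) < Φ(0)` for all
`0 < z ≤ 1`. -/
theorem stmt16 (α : ℝ) (hα : 3 < α) (k : ℕ) (hk : 3 ≤ k) :
    StrictAntiOn (powerLawPhi α k) (Set.Icc 0 1) ∧
      ∀ z : ℝ, 0 < z → z ≤ 1 → powerLawPhi α k z < powerLawPhi α k 0 := by
  have hanti : StrictAntiOn (powerLawPhi α k) (Set.Icc 0 1) := by
    apply strictAntiOn_of_deriv_neg (convex_Icc 0 1) (continuousOn_phi hα k)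
    intro x hx
    rw [interior_Icc] at hx
    obtain ⟨d, hd, hder⟩ := deriv_neg_aux hα hk hx.1 hx.2
    rw [hder.deriv]
    exact hd
  refine ⟨hanti, fun z hz0 hz1 => ?_⟩
  exact hanti (Set.mem_Icc.mpr ⟨le_refl 0, zero_le_one⟩)
    (Set.mem_Icc.mpr ⟨hz0.le, hz1⟩) hz0
end
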